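/- arXiv:2307.11929 — 5 statements merged into one kernel-verified Lean document; each statement's English description precedes it below -/
import Mathlib

section
/- For integers n, p with 0 ≤ 2p ≤ n, the number of lattice paths from (0,0) to (n-p,p) using unit east and north steps that never cross above the diagonal y = x equals binomial(n,p) - binomial(n,p-1). -/
open Finset

/-- Lattice walks from `(0,0)` to `(n-p,p)` with unit east/north steps never crossing
above the diagonal `y = x`, encoded as step sequences `f : Fin n → Bool`
(`true` = north, `false` = east) with `p` north steps and, in every prefix,
at most as many north steps as east steps. -/
def LatticeWalk (n p : ℕ) : Type :=
  {f : Fin n → Bool //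
    (Finset.univ.filter fun i => f i = true).card = p ∧
    ∀ k : Fin n,
      (Finset.univ.filter fun i : Fin n => i ≤ k ∧ f i = true).card ≤
      (Finset.univ.filter fun i : Fin n => i ≤ k ∧ f i = false).card}

def cntW {n : ℕ} (f : Fin n → Bool) (c : Bool) (k : Fin n) : ℕ :=
  (Finset.univ.filter fun i : Fin n => i ≤ k ∧ f i = c).card

def totW {n : ℕ} (f : Fin n → Bool) (c : Bool) : ℕ :=
  (Finset.univ.filter fun i : Fin n => f i = c).card

def Wcond (n p : ℕ) (f : Fin n → Bool) : Prop :=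
  totW f true = p ∧ ∀ k : Fin n, cntW f true k ≤ cntW f false k

lemma latticeWalk_card (n p : ℕ) :
    Nat.card (LatticeWalk n p) = Nat.card {f : Fin n → Bool // Wcond n p f} := rfl

lemma totW_add {n : ℕ} (f : Fin n → Bool) : totW f true + totW f false = n := by
  classical
  unfold totW
  have := Finset.card_filter_add_card_filter_not (s := (Finset.univ : Finset (Fin n)))
    (p := fun i => f i = true)
  simp only [Finset.card_univ, Fintype.card_fin] at this
  have h2 : (Finset.univ.filter fun i : Fin n => f i = false)
      = Finset.univ.filter fun i => ¬ f i = true := by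
    apply Finset.filter_congr; intro i _; simp
  rw [h2]; exact this

lemma totW_le {n : ℕ} (f : Fin n → Bool) (c : Bool) : totW f c ≤ n := by
  have h := totW_add f
  cases c <;> omega

lemma cntW_last {n : ℕ} (f : Fin (n+1) → Bool) (c : Bool) :
    cntW f c (Fin.last n) = totW f c := by
  unfold cntW totW
  congr 1
  apply Finset.filter_congr
  intro i _
  simp [Fin.le_last]

lemma cntW_castSucc {n : ℕ} (g : Fin n → Bool) (b c : Bool) (j : Fin n) :
    cntW (Fin.snoc g b) c (Fin.castSucc j) = cntW g c j := by
  classical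
  unfold cntW
  have h : (Finset.univ.filter fun i : Fin (n+1) => i ≤ Fin.castSucc j ∧ (Fin.snoc g b : Fin (n+1) → Bool) i = c)
      = (Finset.univ.filter fun i : Fin n => i ≤ j ∧ g i = c).map Fin.castSuccEmb := by
    ext i
    simp only [Finset.mem_filter, Finset.mem_univ, true_and, Finset.mem_map]
    constructor
    · rintro ⟨hle, hc⟩
      have hlt : i < Fin.last n := lt_of_le_of_lt hle (Fin.castSucc_lt_last j)
      refine ⟨i.castPred hlt.ne, ⟨?_, ?_⟩, Fin.castSucc_castPred i hlt.ne⟩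
      · rwa [← Fin.castSucc_le_castSucc_iff, Fin.castSucc_castPred]
      · rw [← Fin.castSucc_castPred i hlt.ne] at hc
        rwa [Fin.snoc_castSucc] at hc
    · rintro ⟨i', ⟨hle, hc⟩, rfl⟩
      constructor
      · simpa using hle
      · show (Fin.snoc g b : Fin (n+1) → Bool) i'.castSucc = c
        rw [Fin.snoc_castSucc]; exact hc
  rw [h, Finset.card_map]

lemma totW_snoc {n : ℕ} (g : Fin n → Bool) (b c : Bool) :
    totW (Fin.snoc g b) c = totW g c + if b = c then 1 else 0 := by
  classical
  unfold totW
  rw [Finset.card_filter, Fin.sum_univ_castSucc, Finset.card_filter]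
  simp [Fin.snoc_castSucc, Fin.snoc_last]

lemma wcond_snoc {n p : ℕ} (g : Fin n → Bool) (b : Bool) :
    Wcond (n+1) p (Fin.snoc g b) ↔
      (totW g true + (if b = true then 1 else 0) = p) ∧
      (∀ j : Fin n, cntW g true j ≤ cntW g false j) ∧
      p ≤ totW g false + (if b = false then 1 else 0) := by
  unfold Wcond
  rw [totW_snoc]
  constructor
  · rintro ⟨h1, h2⟩
    refine ⟨h1, fun j => ?_, ?_⟩
    · have := h2 (Fin.castSucc j)
      rwa [cntW_castSucc, cntW_castSucc] at this
    · have := h2 (Fin.last n)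
      rw [cntW_last, cntW_last, totW_snoc, totW_snoc] at this
      omega
  · rintro ⟨h1, h2, h3⟩
    refine ⟨h1, fun k => ?_⟩
    induction k using Fin.lastCases with
    | last =>
      rw [cntW_last, cntW_last, totW_snoc, totW_snoc]
      omega
    | cast j =>
      rw [cntW_castSucc, cntW_castSucc]
      exact h2 j

lemma iteTT : (if (true:Bool) = true then (1:ℕ) else 0) = 1 := rfl
lemma iteTF : (if (true:Bool) = false then (1:ℕ) else 0) = 0 := rfl
lemma iteFT : (if (false:Bool) = true then (1:ℕ) else 0) = 0 := rfl
lemma iteFF : (if (false:Bool) = false then (1:ℕ) else 0) = 1 := rfl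

lemma wcond_snoc_true {n p : ℕ} (g : Fin n → Bool) (h1 : 1 ≤ p) (h2 : 2 * p ≤ n + 1) :
    Wcond (n+1) p (Fin.snoc g true) ↔ Wcond n (p-1) g := by
  rw [wcond_snoc, iteTT, iteTF]
  have htot := totW_add g
  unfold Wcond
  constructor
  · rintro ⟨a, b, c⟩
    exact ⟨by omega, b⟩
  · rintro ⟨a, b⟩
    exact ⟨by omega, b, by omega⟩

lemma wcond_snoc_false {n p : ℕ} (g : Fin n → Bool) (h2 : 2 * p ≤ n + 1) :
    Wcond (n+1) p (Fin.snoc g false) ↔ Wcond n p g := by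
  rw [wcond_snoc, iteFT, iteFF]
  have htot := totW_add g
  unfold Wcond
  constructor
  · rintro ⟨a, b, c⟩
    exact ⟨by omega, b⟩
  · rintro ⟨a, b⟩
    exact ⟨by omega, b, by omega⟩

lemma wcond_snoc_true_zero {n : ℕ} (g : Fin n → Bool) :
    ¬ Wcond (n+1) 0 (Fin.snoc g true) := by
  rw [wcond_snoc]
  rintro ⟨a, -, -⟩
  simp at a

def snocSumEquiv (n p : ℕ) : {f : Fin (n+1) → Bool // Wcond (n+1) p f} ≃
    {g : Fin n → Bool // Wcond (n+1) p (Fin.snoc g true)} ⊕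
    {g : Fin n → Bool // Wcond (n+1) p (Fin.snoc g false)} where
  toFun x :=
    if h : x.1 (Fin.last n) = true then
      Sum.inl ⟨Fin.init x.1, by
        have e : Fin.snoc (Fin.init x.1) true = x.1 := by
          have := Fin.snoc_init_self x.1; rwa [h] at this
        rw [e]; exact x.2⟩
    else
      Sum.inr ⟨Fin.init x.1, by
        have h' : x.1 (Fin.last n) = false := by simpa using h
        have e : Fin.snoc (Fin.init x.1) false = x.1 := by
          have := Fin.snoc_init_self x.1; rwa [h'] at this
        rw [e]; exact x.2⟩
  invFun s := s.elim (fun y => ⟨Fin.snoc y.1 true, y.2⟩) (fun y => ⟨Fin.snoc y.1 false, y.2⟩)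
  left_inv x := by
    dsimp only
    by_cases h : x.1 (Fin.last n) = true
    · rw [dif_pos h]
      apply Subtype.ext
      show Fin.snoc (Fin.init x.1) true = x.1
      have := Fin.snoc_init_self x.1; rwa [h] at this
    · rw [dif_neg h]
      apply Subtype.ext
      show Fin.snoc (Fin.init x.1) false = x.1
      have h' : x.1 (Fin.last n) = false := by simpa using h
      have := Fin.snoc_init_self x.1; rwa [h'] at this
  right_inv s := by
    rcases s with y | y
    · dsimp only
      simp only [Sum.elim_inl]
      erw [dif_pos (show (Fin.snoc y.1 true : Fin (n+1) → Bool) (Fin.last n) = true by rw [Fin.snoc_last])]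
      congr 1
      apply Subtype.ext
      simp [Fin.init_snoc]
    · dsimp only
      simp only [Sum.elim_inr]
      erw [dif_neg (show ¬ (Fin.snoc y.1 false : Fin (n+1) → Bool) (Fin.last n) = true by rw [Fin.snoc_last]; simp)]
      congr 1
      apply Subtype.ext
      simp [Fin.init_snoc]

lemma card_rec (n p : ℕ) :
    Nat.card (LatticeWalk (n+1) p) =
      Nat.card {g : Fin n → Bool // Wcond (n+1) p (Fin.snoc g true)} +
      Nat.card {g : Fin n → Bool // Wcond (n+1) p (Fin.snoc g false)} := by
  rw [latticeWalk_card, Nat.card_congr (snocSumEquiv n p), Nat.card_sum]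

lemma card_empty_of_lt {n p : ℕ} (h : n < 2 * p) : Nat.card (LatticeWalk n p) = 0 := by
  rw [latticeWalk_card, Nat.card_eq_zero]
  left
  constructor
  rintro ⟨f, h1, h2⟩
  cases n with
  | zero =>
    have hle : totW f true ≤ 0 := totW_le f true
    have : totW f true = p := h1
    omega
  | succ m =>
    have h3 := h2 (Fin.last m)
    rw [cntW_last, cntW_last] at h3
    have h4 := totW_add f
    have : totW f true = p := h1
    omega

lemma card_zero_walk (n : ℕ) : Nat.card (LatticeWalk n 0) = 1 := by
  induction n with
  | zero =>
    rw [latticeWalk_card]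
    have : Unique {f : Fin 0 → Bool // Wcond 0 0 f} := by
      refine ⟨⟨⟨fun i => i.elim0, ?_, fun k => k.elim0⟩⟩, ?_⟩
      · simp [totW]
      · rintro ⟨f, hf⟩
        apply Subtype.ext
        funext i
        exact i.elim0
    exact Nat.card_unique
  | succ m ih =>
    rw [card_rec]
    have e1 : Nat.card {g : Fin m → Bool // Wcond (m+1) 0 (Fin.snoc g true)} = 0 := by
      rw [Nat.card_eq_zero]
      left
      exact ⟨fun y => wcond_snoc_true_zero y.1 y.2⟩
    have e2 : Nat.card {g : Fin m → Bool // Wcond (m+1) 0 (Fin.snoc g false)} =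
        Nat.card (LatticeWalk m 0) := by
      rw [latticeWalk_card]
      exact Nat.card_congr (Equiv.subtypeEquivRight fun g => wcond_snoc_false g (by omega))
    rw [e1, e2, ih]

lemma pascal' (n k : ℕ) :
    (n+1).choose k = (if k = 0 then 0 else n.choose (k-1)) + n.choose k := by
  cases k with
  | zero => simp
  | succ m => simp [Nat.choose_succ_succ, Nat.add_comm]

lemma main_nat : ∀ n p : ℕ, 2 * p ≤ n →
    Nat.card (LatticeWalk n p) + (if p = 0 then 0 else n.choose (p-1)) = n.choose p := by
  intro n
  induction n with
  | zero =>
    intro p hp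
    have : p = 0 := by omega
    subst this
    simp [card_zero_walk]
  | succ n ih =>
    intro p hp
    rcases Nat.eq_zero_or_pos p with rfl | hp1
    · rw [show (if (0:ℕ) = 0 then (0:ℕ) else (n+1).choose (0-1)) = 0 from rfl,
        card_zero_walk, Nat.choose_zero_right]
    obtain ⟨k, rfl⟩ : ∃ k, p = k + 1 := ⟨p - 1, by omega⟩
    rw [card_rec]
    have e1 : Nat.card {g : Fin n → Bool // Wcond (n+1) (k+1) (Fin.snoc g true)} =
        Nat.card (LatticeWalk n k) := by
      rw [latticeWalk_card]
      exact Nat.card_congr (Equiv.subtypeEquivRight fun g =>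
        (wcond_snoc_true g (by omega) (by omega)).trans (by norm_num))
    have e2 : Nat.card {g : Fin n → Bool // Wcond (n+1) (k+1) (Fin.snoc g false)} =
        Nat.card (LatticeWalk n (k+1)) := by
      rw [latticeWalk_card]
      exact Nat.card_congr (Equiv.subtypeEquivRight fun g => wcond_snoc_false g (by omega))
    rw [e1, e2]
    simp only [if_neg (Nat.succ_ne_zero k), Nat.add_sub_cancel]
    rw [pascal' n k, pascal' n (k+1)]
    simp only [if_neg (Nat.succ_ne_zero k), Nat.add_sub_cancel]
    have ihk := ih k (by omega)
    rcases Nat.lt_or_ge (2 * (k+1)) (n+1) with hlt | hge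
    · have ihk1 := ih (k+1) (by omega)
      simp only [if_neg (Nat.succ_ne_zero k), Nat.add_sub_cancel] at ihk1
      omega
    · have hz : Nat.card (LatticeWalk n (k+1)) = 0 := card_empty_of_lt (by omega)
      have hsymm : n.choose (k+1) = n.choose k := by
        have h1 := Nat.choose_symm (n := n) (k := k+1) (by omega)
        have h2 : n - (k+1) = k := by omega
        rw [h2] at h1
        exact h1.symm
      omega

theorem stmt0 (n p : ℕ) (hp : 2 * p ≤ n) :
    (Nat.card (LatticeWalk n p) : ℤ) =
      (n.choose p : ℤ) - (if p = 0 then 0 else (n.choose (p - 1) : ℤ)) := by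
  have h := main_nat n p hp
  rcases Nat.eq_zero_or_pos p with rfl | hp1
  · rw [if_pos rfl] at h
    rw [if_pos rfl]
    omega
  · rw [if_neg (show ¬ p = 0 by omega)] at h
    rw [if_neg (show ¬ p = 0 by omega)]
    omega
end

section
/- In the Temperley–Lieb algebra TL_n(δ) over a commutative ring, if a word w = e_{i_1} ⋯ e_{i_l} in the generators is reduced (of minimal length among all words equal to it up to a power of δ), then the maximal index m = max{i_1,…,i_l} occurs exactly once in the sequence (i_1,…,i_l). -/
/-- The defining relations of the Temperley–Lieb algebra `TL_n(δ)`: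
`e_i² = δ e_i`, `e_i e_j e_i = e_i` for `|i-j| = 1`, and `e_i e_j = e_j e_i`
for `|i-j| > 1`.  Generators are indexed by `Fin m` with `m = n - 1`. -/
inductive TLRel (k : Type*) [CommRing k] (δ : k) (m : ℕ) :
    FreeAlgebra k (Fin m) → FreeAlgebra k (Fin m) → Prop
  | sq (i : Fin m) :
      TLRel k δ m (FreeAlgebra.ι k i * FreeAlgebra.ι k i) (δ • FreeAlgebra.ι k i)
  | adj (i j : Fin m) (h : (i : ℕ) + 1 = j ∨ (j : ℕ) + 1 = i) :
      TLRel k δ m (FreeAlgebra.ι k i * FreeAlgebra.ι k j * FreeAlgebra.ι k i)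
        (FreeAlgebra.ι k i)
  | comm (i j : Fin m) (h : (i : ℕ) + 1 < j ∨ (j : ℕ) + 1 < i) :
      TLRel k δ m (FreeAlgebra.ι k i * FreeAlgebra.ι k j)
        (FreeAlgebra.ι k j * FreeAlgebra.ι k i)

/-- The Temperley–Lieb algebra `TL_n(δ)` over a commutative ring `k`. -/
abbrev TL (k : Type*) [CommRing k] (δ : k) (n : ℕ) : Type _ :=
  RingQuot (TLRel k δ (n - 1))

/-- The generator `e_i` of `TL_n(δ)` (here `i : Fin (n-1)` corresponds to `e_{i+1}`). -/
def TLgen (k : Type*) [CommRing k] (δ : k) (n : ℕ) (i : Fin (n - 1)) : TL k δ n :=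
  RingQuot.mkAlgHom k (TLRel k δ (n - 1)) (FreeAlgebra.ι k i)

/-- Evaluation of a word in the generators. -/
def TLword (k : Type*) [CommRing k] (δ : k) (n : ℕ) (l : List (Fin (n - 1))) : TL k δ n :=
  (l.map (TLgen k δ n)).prod

/-- A word is reduced if it has minimal length among all words equal to it
up to a factor which is a power of `δ`. -/
def TLreduced (k : Type*) [CommRing k] (δ : k) (n : ℕ) (l : List (Fin (n - 1))) : Prop :=
  ∀ l' : List (Fin (n - 1)),
    ((∃ m : ℕ, TLword k δ n l' = δ ^ m • TLword k δ n l) ∨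
     (∃ m : ℕ, TLword k δ n l = δ ^ m • TLword k δ n l')) →
    l.length ≤ l'.length


section Aux
variable {k : Type*} [CommRing k] (δ : k) (n : ℕ)

lemma TLword_append (l1 l2 : List (Fin (n-1))) :
    TLword k δ n (l1 ++ l2) = TLword k δ n l1 * TLword k δ n l2 := by
  simp [TLword, List.prod_append]

lemma TLword_cons (i : Fin (n-1)) (l : List (Fin (n-1))) :
    TLword k δ n (i :: l) = TLgen k δ n i * TLword k δ n l := by
  simp [TLword]

lemma TLgen_sq (i : Fin (n-1)) :
    TLgen k δ n i * TLgen k δ n i = δ • TLgen k δ n i := by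
  have := RingQuot.mkAlgHom_rel k (TLRel.sq (k := k) (δ := δ) i)
  simpa [TLgen, map_mul] using this

lemma TLgen_adj (i j : Fin (n-1)) (h : (i : ℕ) + 1 = j ∨ (j : ℕ) + 1 = i) :
    TLgen k δ n i * TLgen k δ n j * TLgen k δ n i = TLgen k δ n i := by
  have := RingQuot.mkAlgHom_rel k (TLRel.adj (k := k) (δ := δ) i j h)
  simpa [TLgen, map_mul] using this

lemma TLgen_comm (i j : Fin (n-1)) (h : (i : ℕ) + 1 < j ∨ (j : ℕ) + 1 < i) :
    TLgen k δ n i * TLgen k δ n j = TLgen k δ n j * TLgen k δ n i := by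
  have := RingQuot.mkAlgHom_rel k (TLRel.comm (k := k) (δ := δ) i j h)
  simpa [TLgen, map_mul] using this

lemma TLgen_comm_word (i : Fin (n-1)) (b : List (Fin (n-1)))
    (hb : ∀ x ∈ b, (x : ℕ) + 1 < i) :
    TLgen k δ n i * TLword k δ n b = TLword k δ n b * TLgen k δ n i := by
  induction b with
  | nil => simp [TLword]
  | cons x b ih =>
    have hx : (x : ℕ) + 1 < i := hb x (by simp)
    have hcomm := TLgen_comm δ n i x (Or.inr hx)
    rw [TLword_cons, ← mul_assoc, hcomm, mul_assoc,
      ih (fun y hy => hb y (by simp [hy])), ← mul_assoc]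

lemma TLaux_sq (A B C : TL k δ n) (i : Fin (n-1))
    (hc : TLgen k δ n i * B = B * TLgen k δ n i) :
    A * (TLgen k δ n i * (B * (TLgen k δ n i * C)))
      = δ • (A * (B * (TLgen k δ n i * C))) := by
  calc A * (TLgen k δ n i * (B * (TLgen k δ n i * C)))
      = A * ((TLgen k δ n i * B) * (TLgen k δ n i * C)) := by simp only [mul_assoc]
    _ = A * ((B * TLgen k δ n i) * (TLgen k δ n i * C)) := by rw [hc]
    _ = A * (B * ((TLgen k δ n i * TLgen k δ n i) * C)) := by simp only [mul_assoc]
    _ = A * (B * ((δ • TLgen k δ n i) * C)) := by rw [TLgen_sq]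
    _ = δ • (A * (B * (TLgen k δ n i * C))) := by
        rw [smul_mul_assoc, mul_smul_comm, mul_smul_comm]

lemma TLaux_adj (A B1 B2 C : TL k δ n) (i j : Fin (n-1))
    (h1 : TLgen k δ n i * B1 = B1 * TLgen k δ n i)
    (h2 : TLgen k δ n i * B2 = B2 * TLgen k δ n i)
    (h3 : (j : ℕ) + 1 = i) :
    A * (TLgen k δ n i * (B1 * (TLgen k δ n j * (B2 * (TLgen k δ n i * C)))))
      = A * (B1 * (TLgen k δ n i * (B2 * C))) := by
  have hadj := TLgen_adj δ n i j (Or.inr h3)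
  calc A * (TLgen k δ n i * (B1 * (TLgen k δ n j * (B2 * (TLgen k δ n i * C)))))
      = A * ((TLgen k δ n i * B1) * (TLgen k δ n j * ((B2 * TLgen k δ n i) * C))) := by
        simp only [mul_assoc]
    _ = A * ((B1 * TLgen k δ n i) * (TLgen k δ n j * ((TLgen k δ n i * B2) * C))) := by
        rw [h1, h2]
    _ = A * (B1 * ((TLgen k δ n i * TLgen k δ n j * TLgen k δ n i) * (B2 * C))) := by
        simp only [mul_assoc]
    _ = A * (B1 * (TLgen k δ n i * (B2 * C))) := by rw [hadj]

lemma split_first {α : Type*} (P : α → Prop) :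
    ∀ (l : List α), (∃ x ∈ l, P x) →
      ∃ s j t, l = s ++ j :: t ∧ P j ∧ ∀ x ∈ s, ¬ P x := by
  intro l
  induction l with
  | nil => simp
  | cons y l ih =>
    intro h
    by_cases hy : P y
    · exact ⟨[], y, l, rfl, hy, by simp⟩
    · obtain ⟨x, hx, hPx⟩ := h
      have hx' : x ∈ l := by
        rcases List.mem_cons.mp hx with h | h
        · exact absurd (h ▸ hPx) hy
        · exact h
      obtain ⟨s, j, t, rfl, hj, hs⟩ := ih ⟨x, hx', hPx⟩
      refine ⟨y :: s, j, t, rfl, hj, ?_⟩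
      intro z hz
      rcases List.mem_cons.mp hz with h | h
      · exact h ▸ hy
      · exact hs z h

lemma TLmain : ∀ t : ℕ, ∀ (i : Fin (n-1)), (i : ℕ) = t →
    ∀ (b a c : List (Fin (n-1))), (∀ x ∈ b, (x : ℕ) < t) →
    ∃ (l' : List (Fin (n-1))) (p : ℕ),
      TLword k δ n (a ++ i :: b ++ i :: c) = δ ^ p • TLword k δ n l' ∧
      l'.length < (a ++ i :: b ++ i :: c).length := by
  intro t
  induction t using Nat.strong_induction_on with
  | _ t IH =>
  intro i hi b a c hb
  by_cases hex : ∃ j ∈ b, (j : ℕ) + 1 = t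
  · obtain ⟨b1, j, b2, rfl, hj, hb1⟩ :=
      split_first (fun x : Fin (n-1) => (x : ℕ) + 1 = t) b hex
    have hb1' : ∀ x ∈ b1, (x : ℕ) + 1 < (i : ℕ) := by
      intro x hx
      have h1 : (x : ℕ) < t := hb x (by simp [hx])
      have h2 := hb1 x hx
      omega
    by_cases hex2 : ∃ j' ∈ b2, (j' : ℕ) + 1 = t
    · obtain ⟨b3, j', b4, rfl, hj', hb3⟩ :=
        split_first (fun x : Fin (n-1) => (x : ℕ) + 1 = t) b2 hex2
      have hjj' : j' = j := by
        apply Fin.ext; omega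
      subst hjj'
      have hb3' : ∀ x ∈ b3, (x : ℕ) < (j' : ℕ) := by
        intro x hx
        have hx1 : (x : ℕ) < t := hb x (by simp [hx])
        have hx2 := hb3 x hx
        omega
      obtain ⟨l', p, heq, hlen⟩ :=
        IH (j' : ℕ) (by omega) j' rfl b3 (a ++ i :: b1) (b4 ++ i :: c) hb3'
      refine ⟨l', p, ?_, ?_⟩
      · rw [← heq]; congr 1; simp
      · calc l'.length < ((a ++ i :: b1) ++ j' :: b3 ++ j' :: (b4 ++ i :: c)).length := hlen
          _ = (a ++ i :: (b1 ++ j' :: (b3 ++ j' :: b4)) ++ i :: c).length := by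
              simp
    · have hb2' : ∀ x ∈ b2, (x : ℕ) + 1 < (i : ℕ) := by
        intro x hx
        have hx1 : (x : ℕ) < t := hb x (by simp [hx])
        have hx2 : ¬ ((x : ℕ) + 1 = t) := fun h => hex2 ⟨x, hx, h⟩
        omega
      refine ⟨a ++ b1 ++ i :: (b2 ++ c), 0, ?_, ?_⟩
      · rw [pow_zero, one_smul]
        have key := TLaux_adj δ n (TLword k δ n a) (TLword k δ n b1) (TLword k δ n b2)
          (TLword k δ n c) i j
          (TLgen_comm_word δ n i b1 hb1') (TLgen_comm_word δ n i b2 hb2') (by omega)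
        simp only [TLword_append, TLword_cons, mul_assoc] at key ⊢
        exact key
      · simp
  · have hb' : ∀ x ∈ b, (x : ℕ) + 1 < (i : ℕ) := by
      intro x hx
      have h1 := hb x hx
      have h2 : ¬ ((x : ℕ) + 1 = t) := fun h => hex ⟨x, hx, h⟩
      omega
    refine ⟨a ++ b ++ i :: c, 1, ?_, ?_⟩
    · rw [pow_one]
      have key := TLaux_sq δ n (TLword k δ n a) (TLword k δ n b) (TLword k δ n c) i
        (TLgen_comm_word δ n i b hb')
      simp only [TLword_append, TLword_cons, mul_assoc] at key ⊢
      exact key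
    · simp

end Aux

/-- Jones' Lemma: in a reduced word the maximal occurring index occurs exactly once. -/
theorem stmt3 (k : Type*) [CommRing k] (δ : k) (n : ℕ) (l : List (Fin (n - 1)))
    (hred : TLreduced k δ n l) (m : Fin (n - 1)) (hm : m ∈ l) (hmax : ∀ i ∈ l, i ≤ m) :
    l.count m = 1 := by
  have h1 : 1 ≤ l.count m := List.count_pos_iff.mpr hm
  by_contra hne
  have h2 : 2 ≤ l.count m := by omega
  obtain ⟨s, j, t, rfl, hj, hs⟩ :=
    split_first (fun x : Fin (n-1) => x = m) l ⟨m, hm, rfl⟩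
  have hj2 := hj.symm
  subst hj2
  have hmt : m ∈ t := by
    have hcs : s.count m = 0 := List.count_eq_zero.mpr (fun h => hs m h rfl)
    have hct : 1 ≤ t.count m := by
      rw [List.count_append, List.count_cons_self, hcs] at h2; omega
    exact List.count_pos_iff.mp hct
  obtain ⟨s2, j2, t2, rfl, hj2, hs2⟩ :=
    split_first (fun x : Fin (n-1) => x = m) t ⟨m, hmt, rfl⟩
  have hj3 := hj2.symm
  subst hj3
  have hs2' : ∀ x ∈ s2, (x : ℕ) < (m : ℕ) := by
    intro x hx
    have hle : x ≤ m := hmax x (by simp [hx])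
    have hne' : x ≠ m := hs2 x hx
    have hval := Fin.le_def.mp hle
    rcases lt_or_eq_of_le hval with h | h
    · exact h
    · exact absurd (Fin.ext h) hne'
  obtain ⟨l', p, heq, hlen⟩ := TLmain δ n (m : ℕ) m rfl s2 s t2 hs2'
  rw [show s ++ m :: s2 ++ m :: t2 = s ++ m :: (s2 ++ m :: t2) from by simp] at heq hlen
  have := hred l' (Or.inr ⟨p, heq⟩)
  omega
end

section
/- The set of words in Jones normal form in TL_n is in bijection with the set of Dyck paths from (0,0) to (n,n), hence has cardinality the n-th Catalan number (1/(n+1))·binomial(2n,n). -/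
/-- The data of a word in Jones normal form in `TL_n`: a number `r` of descending runs
and sequences `j, k` with `0 < j_1 < ⋯ < j_r < n`, `0 < k_1 < ⋯ < k_r < n` and
`k_i ≤ j_i` for all `i`. -/
def JonesNF (n : ℕ) : Type :=
  {x : Σ r : ℕ, (Fin r → ℕ) × (Fin r → ℕ) //
    StrictMono x.2.1 ∧ StrictMono x.2.2 ∧
    (∀ i, 0 < x.2.1 i ∧ x.2.1 i < n) ∧
    (∀ i, 0 < x.2.2 i ∧ x.2.2 i < n) ∧
    (∀ i, x.2.2 i ≤ x.2.1 i)}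

/-- Dyck paths from `(0,0)` to `(n,n)`: monotone lattice paths (`true` = north,
`false` = east) never crossing above the diagonal. -/
def DyckPath (n : ℕ) : Type :=
  {f : Fin (2 * n) → Bool //
    (Finset.univ.filter fun i => f i = true).card = n ∧
    ∀ k : Fin (2 * n),
      (Finset.univ.filter fun i : Fin (2 * n) => i ≤ k ∧ f i = true).card ≤
      (Finset.univ.filter fun i : Fin (2 * n) => i ≤ k ∧ f i = false).card}

open Finset in
lemma count_take_ofFn {α : Type*} [DecidableEq α] {m : ℕ} (v : Fin m → α) (a : α) (i : ℕ) :
    ((List.ofFn v).take i).count a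
      = (Finset.univ.filter fun t : Fin m => (t : ℕ) < i ∧ v t = a).card := by
  induction i with
  | zero => simp
  | succ i ih =>
    by_cases h : i < m
    · rw [List.take_succ, List.count_append, ih]
      have hget : (List.ofFn v)[i]? = some (v ⟨i, h⟩) := by
        rw [List.getElem?_eq_getElem (by simpa using h)]
        simp
      rw [hget]
      have hsplit : (Finset.univ.filter fun t : Fin m => (t : ℕ) < i + 1 ∧ v t = a)
          = (Finset.univ.filter fun t : Fin m => (t : ℕ) < i ∧ v t = a)
            ∪ (Finset.univ.filter fun t : Fin m => t = ⟨i, h⟩ ∧ v t = a) := by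
        ext t
        simp only [Finset.mem_filter, Finset.mem_union, Finset.mem_univ, true_and]
        constructor
        · rintro ⟨ht, hv⟩
          rcases Nat.lt_succ_iff_lt_or_eq.mp ht with h' | h'
          · exact Or.inl ⟨h', hv⟩
          · exact Or.inr ⟨Fin.ext h', hv⟩
        · rintro (⟨ht, hv⟩ | ⟨ht, hv⟩)
          · exact ⟨Nat.lt_succ_of_lt ht, hv⟩
          · exact ⟨by simp [ht], hv⟩
      rw [hsplit, Finset.card_union_of_disjoint]
      · congr 1
        by_cases hv : v ⟨i, h⟩ = a
        · have : (Finset.univ.filter fun t : Fin m => t = ⟨i, h⟩ ∧ v t = a) = {⟨i, h⟩} := by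
            ext t; simp +contextual [hv]
          simp [this, hv]
        · have : (Finset.univ.filter fun t : Fin m => t = ⟨i, h⟩ ∧ v t = a) = ∅ := by
            ext t; simp +contextual [hv]
          simp [this, List.count_singleton', hv]
      · rw [Finset.disjoint_left]
        intro t ht ht'
        simp only [Finset.mem_filter] at ht ht'
        obtain ⟨-, ht, -⟩ := ht
        obtain ⟨-, rfl, -⟩ := ht'
        simp at ht
    · have hfilter : (Finset.univ.filter fun t : Fin m => (t : ℕ) < i + 1 ∧ v t = a)
          = (Finset.univ.filter fun t : Fin m => (t : ℕ) < i ∧ v t = a) := by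
        apply Finset.filter_congr
        intro t _
        have := t.isLt
        constructor
        · rintro ⟨-, hv⟩; exact ⟨by omega, hv⟩
        · rintro ⟨-, hv⟩; exact ⟨by omega, hv⟩
      rw [hfilter, ← ih, List.take_of_length_le (by simp; omega),
        List.take_of_length_le (by simp; omega)]


def SFun (n : ℕ) : Type :=
  {f : ℕ → ℕ // Monotone f ∧ (∀ i, f i ≤ i) ∧ ∀ i, n - 1 ≤ i → f i = f (n - 1)}

variable {n : ℕ}

def toSFun (x : JonesNF n) : ℕ → ℕ := fun m =>
  (Finset.univ.filter fun i => x.1.2.1 i ≤ min m (n - 1)).sup x.1.2.2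

lemma toSFun_mono (x : JonesNF n) : Monotone (toSFun x) := by
  intro m m' hmm
  apply Finset.sup_mono
  apply Finset.monotone_filter_right
  intro i _ hi
  exact le_trans hi (by omega)

lemma toSFun_le (x : JonesNF n) : ∀ m, toSFun x m ≤ m := by
  intro m
  apply Finset.sup_le
  intro i hi
  simp only [Finset.mem_filter, Finset.mem_univ, true_and] at hi
  have := x.2.2.2.2.2 i
  omega

lemma toSFun_tail (x : JonesNF n) : ∀ m, n - 1 ≤ m → toSFun x m = toSFun x (n - 1) := by
  intro m hm
  unfold toSFun
  rw [min_eq_right hm, min_self]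

def toS (x : JonesNF n) : SFun n := ⟨toSFun x, toSFun_mono x, toSFun_le x, toSFun_tail x⟩

lemma toSFun_at_jump (x : JonesNF n) (i : Fin x.1.1) : toSFun x (x.1.2.1 i) = x.1.2.2 i := by
  obtain ⟨hj, hk, hjr, hkr, hkj⟩ := x.2
  have h1 : min (x.1.2.1 i) (n - 1) = x.1.2.1 i := min_eq_left (by have := (hjr i).2; omega)
  unfold toSFun
  rw [h1]
  apply le_antisymm
  · apply Finset.sup_le
    intro i' hi'
    simp only [Finset.mem_filter, Finset.mem_univ, true_and] at hi'
    exact hk.monotone ((hj.le_iff_le).mp hi')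
  · exact Finset.le_sup (by simp)

lemma toSFun_jump_lt (x : JonesNF n) (i : Fin x.1.1) :
    toSFun x (x.1.2.1 i - 1) < toSFun x (x.1.2.1 i) := by
  obtain ⟨hj, hk, hjr, hkr, hkj⟩ := x.2
  rw [toSFun_at_jump x i]
  have h1 : min (x.1.2.1 i - 1) (n - 1) = x.1.2.1 i - 1 :=
    min_eq_left (by have := (hjr i).2; omega)
  unfold toSFun
  rw [h1]
  rw [Finset.sup_lt_iff (by simpa using (hkr i).1)]
  intro i' hi'
  simp only [Finset.mem_filter, Finset.mem_univ, true_and] at hi'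
  have h2 : x.1.2.1 i' < x.1.2.1 i := by have := (hjr i).1; omega
  exact hk (hj.lt_iff_lt.mp h2)

lemma toSFun_jump_exists (x : JonesNF n) (m : ℕ) (hm : m < n)
    (hlt : toSFun x (m - 1) < toSFun x m) : ∃ i, x.1.2.1 i = m := by
  by_contra hno
  push_neg at hno
  have hm0 : 0 < m := by
    by_contra h0
    push_neg at h0
    interval_cases m
    simp at hlt
  have : toSFun x m = toSFun x (m - 1) := by
    unfold toSFun
    rw [min_eq_left (by omega), min_eq_left (by omega)]
    congr 1
    apply Finset.filter_congr
    intro i _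
    have := hno i
    constructor <;> · intro h; omega
  omega

def jumps (n : ℕ) (f : ℕ → ℕ) : Finset ℕ :=
  (Finset.range n).filter fun m => f (m - 1) < f m

lemma jumps_mem {f : ℕ → ℕ} {m : ℕ} (hm : m ∈ jumps n f) : m < n ∧ f (m - 1) < f m := by
  simpa [jumps] using hm

def ofS (f : SFun n) : JonesNF n := by
  refine ⟨⟨(jumps n f.1).card, fun i => (jumps n f.1).orderEmbOfFin rfl i,
    fun i => f.1 ((jumps n f.1).orderEmbOfFin rfl i)⟩, ?_, ?_, ?_, ?_, ?_⟩
  · exact ((jumps n f.1).orderEmbOfFin rfl).strictMono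
  · show StrictMono fun i => f.1 ((jumps n f.1).orderEmbOfFin rfl i)
    intro i i' hii
    have h1 : (jumps n f.1).orderEmbOfFin rfl i < (jumps n f.1).orderEmbOfFin rfl i' :=
      ((jumps n f.1).orderEmbOfFin rfl).strictMono hii
    have h2 := (jumps_mem (Finset.orderEmbOfFin_mem (jumps n f.1) rfl i')).2
    calc f.1 ((jumps n f.1).orderEmbOfFin rfl i)
        ≤ f.1 ((jumps n f.1).orderEmbOfFin rfl i' - 1) := f.2.1 (by omega)
      _ < f.1 ((jumps n f.1).orderEmbOfFin rfl i') := h2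
  · intro i
    show 0 < (jumps n f.1).orderEmbOfFin rfl i ∧ (jumps n f.1).orderEmbOfFin rfl i < n
    have h2 := jumps_mem (Finset.orderEmbOfFin_mem (jumps n f.1) rfl i)
    constructor
    · by_contra h0
      push_neg at h0
      have h1 : (jumps n f.1).orderEmbOfFin rfl i = 0 := by omega
      rw [h1] at h2
      simp at h2
    · exact h2.1
  · intro i
    show 0 < f.1 ((jumps n f.1).orderEmbOfFin rfl i) ∧ f.1 ((jumps n f.1).orderEmbOfFin rfl i) < n
    have h2 := jumps_mem (Finset.orderEmbOfFin_mem (jumps n f.1) rfl i)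
    have h3 := f.2.2.1 ((jumps n f.1).orderEmbOfFin rfl i)
    omega
  · intro i
    show f.1 ((jumps n f.1).orderEmbOfFin rfl i) ≤ (jumps n f.1).orderEmbOfFin rfl i
    exact f.2.2.1 _

lemma ofS_proj1 (f : SFun n) :
    (ofS f).1.2.1 = fun i => (jumps n f.1).orderEmbOfFin rfl i := rfl

lemma ofS_proj2 (f : SFun n) :
    (ofS f).1.2.2 = fun i => f.1 ((jumps n f.1).orderEmbOfFin rfl i) := rfl

lemma jumps_range (f : SFun n) {m : ℕ} (hm : m ∈ jumps n f.1) :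
    ∃ i, (jumps n f.1).orderEmbOfFin rfl i = m := by
  have hrange := Finset.range_orderEmbOfFin (jumps n f.1) rfl
  have : m ∈ ((jumps n f.1) : Set ℕ) := hm
  rw [← hrange] at this
  exact Set.mem_range.mp this

lemma toS_claim (f : SFun n) : ∀ m, m < n → toSFun (ofS f) m = f.1 m := by
  intro m
  induction m with
  | zero =>
    intro h0
    have h1 : toSFun (ofS f) 0 = 0 := by
      apply Nat.le_antisymm _ (Nat.zero_le _)
      apply Finset.sup_le
      intro i hi
      simp only [Finset.mem_filter, Finset.mem_univ, true_and] at hi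
      simp only [ofS_proj1] at hi
      have h2 := jumps_mem (Finset.orderEmbOfFin_mem (jumps n f.1) rfl i)
      rw [ofS_proj2]
      exfalso
      have h3 : (jumps n f.1).orderEmbOfFin rfl i = 0 := by omega
      rw [h3] at h2
      simp at h2
    have h2 := f.2.2.1 0
    omega
  | succ m ih =>
    intro hm
    have hmin : min (m + 1) (n - 1) = m + 1 := by omega
    have hmin' : min m (n - 1) = m := by omega
    by_cases hmem : (m + 1) ∈ jumps n f.1
    · obtain ⟨i0, hi0⟩ := jumps_range f hmem
      unfold toSFun
      rw [hmin, ofS_proj1, ofS_proj2]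
      apply le_antisymm
      · apply Finset.sup_le
        intro i' hi'
        simp only [Finset.mem_filter, Finset.mem_univ, true_and] at hi'
        exact f.2.1 (le_trans hi' (le_refl _))
      · have hmem0 : i0 ∈ Finset.univ.filter
            fun i => (jumps n f.1).orderEmbOfFin rfl i ≤ m + 1 := by
          simp only [Finset.mem_filter, Finset.mem_univ, true_and]
          omega
        calc f.1 (m + 1) = f.1 ((jumps n f.1).orderEmbOfFin rfl i0) := by rw [hi0]
          _ ≤ _ := Finset.le_sup (f := fun i => f.1 ((jumps n f.1).orderEmbOfFin rfl i)) hmem0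
    · have hstep : f.1 (m + 1) = f.1 m := by
        have h1 : ¬ (f.1 m < f.1 (m + 1)) := by
          intro hcon
          exact hmem (by simp [jumps, hm]; exact hcon)
        have h2 : f.1 m ≤ f.1 (m + 1) := f.2.1 (by omega)
        omega
      have hfe : toSFun (ofS f) (m + 1) = toSFun (ofS f) m := by
        unfold toSFun
        rw [hmin, hmin']
        congr 1
        apply Finset.filter_congr
        intro i _
        rw [ofS_proj1]
        have h2 := jumps_mem (Finset.orderEmbOfFin_mem (jumps n f.1) rfl i)
        have h3 : (jumps n f.1).orderEmbOfFin rfl i ≠ m + 1 := by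
          intro hcon
          exact hmem (hcon ▸ Finset.orderEmbOfFin_mem (jumps n f.1) rfl i)
        constructor <;> · intro h; simp only at h ⊢; omega
      rw [hfe, ih (by omega), hstep]

lemma toS_ofS (f : SFun n) : toS (ofS f) = f := by
  apply Subtype.ext
  funext m
  show toSFun (ofS f) m = f.1 m
  rcases Nat.eq_zero_or_pos n with hn | hn
  · subst hn
    have hJ : (jumps 0 f.1).card = 0 := by simp [jumps]
    have h0 : toSFun (ofS f) 0 = toSFun (ofS f) m := by
      unfold toSFun
      simp
    have h1 : toSFun (ofS f) m = 0 := by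
      rw [← h0]
      apply Nat.le_antisymm _ (Nat.zero_le _)
      apply Finset.sup_le
      intro i _
      have h5 : (ofS f).1.1 = (jumps 0 f.1).card := rfl
      have h6 := i.isLt
      omega
    have h2 := f.2.2.2 m (by omega)
    have h3 := f.2.2.1 0
    rw [h1, h2]
    simp only [Nat.zero_sub]
    omega
  · have h1 : toSFun (ofS f) m = toSFun (ofS f) (min m (n - 1)) := by
      unfold toSFun
      have : min (min m (n - 1)) (n - 1) = min m (n - 1) := by omega
      rw [this]
    rw [h1, toS_claim f _ (by omega)]
    rcases le_or_gt m (n - 1) with h | h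
    · rw [min_eq_left h]
    · rw [min_eq_right (by omega)]
      exact (f.2.2.2 m (by omega)).symm

lemma JonesNF.eq_of_range (a b : JonesNF n)
    (hrange : Set.range a.1.2.1 = Set.range b.1.2.1)
    (hval : ∀ (i : Fin a.1.1) (i' : Fin b.1.1), a.1.2.1 i = b.1.2.1 i' → a.1.2.2 i = b.1.2.2 i') :
    a = b := by
  obtain ⟨⟨r, j, k⟩, hj, hk, hrest⟩ := a
  obtain ⟨⟨r', j', k'⟩, hj', hk', hrest'⟩ := b
  have hrange' : Set.range j = Set.range j' := hrange
  have hr : r = r' := by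
    have h1 : (Finset.image j Finset.univ) = Finset.image j' Finset.univ := by
      apply Finset.coe_injective
      simp only [Finset.coe_image, Finset.coe_univ, Set.image_univ]
      exact hrange'
    have h2 := congrArg Finset.card h1
    rwa [Finset.card_image_of_injective _ hj.injective,
      Finset.card_image_of_injective _ hj'.injective, Finset.card_univ, Finset.card_univ,
      Fintype.card_fin, Fintype.card_fin] at h2
  subst hr
  letI : WellFoundedLT (Fin r) := Finite.to_wellFoundedLT
  have hjj : j = j' := (StrictMono.range_inj hj hj').mp hrange'
  subst hjj
  have hkk : k = k' := funext fun i => hval i i rfl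
  subst hkk
  rfl

lemma jumps_toS (x : JonesNF n) : jumps n (toSFun x) = Finset.image x.1.2.1 Finset.univ := by
  ext m
  simp only [jumps, Finset.mem_filter, Finset.mem_range, Finset.mem_image, Finset.mem_univ,
    true_and]
  constructor
  · rintro ⟨hm, hlt⟩
    exact toSFun_jump_exists x m hm hlt
  · rintro ⟨i, rfl⟩
    exact ⟨(x.2.2.2.1 i).2, toSFun_jump_lt x i⟩

lemma ofS_toS (x : JonesNF n) : ofS (toS x) = x := by
  apply JonesNF.eq_of_range
  · show Set.range (fun i => (jumps n (toSFun x)).orderEmbOfFin rfl i) = Set.range x.1.2.1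
    have h1 : Set.range (fun i => (jumps n (toSFun x)).orderEmbOfFin rfl i)
        = ((jumps n (toSFun x)) : Set ℕ) := Finset.range_orderEmbOfFin _ rfl
    rw [h1, jumps_toS x, Finset.coe_image, Finset.coe_univ, Set.image_univ]
  · intro i i' heq
    have heq' : (jumps n (toSFun x)).orderEmbOfFin rfl i = x.1.2.1 i' := heq
    show toSFun x ((jumps n (toSFun x)).orderEmbOfFin rfl i) = x.1.2.2 i'
    rw [heq', toSFun_at_jump]

def equivJS (n : ℕ) : JonesNF n ≃ SFun n := ⟨toS, ofS, ofS_toS, toS_ofS⟩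


lemma strictMono_gap {m : ℕ} {g : Fin m → ℕ} (hg : StrictMono g) :
    ∀ (d : ℕ) (a b : Fin m), (a : ℕ) + d = (b : ℕ) → g a + d ≤ g b := by
  intro d
  induction d with
  | zero =>
    intro a b h
    have : a = b := Fin.ext (by omega)
    subst this; simp
  | succ d ih =>
    intro a b h
    have hb' : (a : ℕ) + d < m := by have := b.isLt; omega
    have h1 := ih a ⟨(a : ℕ) + d, hb'⟩ rfl
    have h2 : g ⟨(a : ℕ) + d, hb'⟩ < g b := hg (by simp [Fin.lt_def]; omega)
    omega

/-- the "false" (east) positions of the Dyck path associated to `f`. -/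
def sEmb (f : ℕ → ℕ) (hf : ∀ i, f i ≤ i) : Fin n → Fin (2 * n) :=
  fun i => ⟨(i : ℕ) + f i, by have h1 := hf i; have h2 := i.isLt; omega⟩

lemma sEmb_strictMono (f : ℕ → ℕ) (hm : Monotone f) (hf : ∀ i, f i ≤ i) :
    StrictMono (sEmb (n := n) f hf) := by
  intro a b hab
  have : f a ≤ f b := hm (le_of_lt hab)
  simp only [sEmb, Fin.lt_def] at hab ⊢
  omega

def toDFun (f : ℕ → ℕ) : Fin (2 * n) → Bool :=
  fun t => decide (∀ i < n, (t : ℕ) ≠ i + f i)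

lemma toDFun_eq_false_iff (f : ℕ → ℕ) (hf : ∀ i, f i ≤ i) (t : Fin (2 * n)) :
    toDFun f t = false ↔ ∃ i : Fin n, sEmb f hf i = t := by
  simp only [toDFun, decide_eq_false_iff_not, not_forall]
  constructor
  · rintro ⟨i, hi, hne⟩
    rw [not_ne_iff] at hne
    exact ⟨⟨i, hi⟩, Fin.ext (by simp [sEmb, hne])⟩
  · rintro ⟨i, hi⟩
    refine ⟨i, i.isLt, ?_⟩
    rw [not_ne_iff, ← hi]
    rfl

lemma toD_falseSet (f : ℕ → ℕ) (hf : ∀ i, f i ≤ i) :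
    (Finset.univ.filter fun t : Fin (2 * n) => toDFun f t = false)
      = Finset.image (sEmb f hf) Finset.univ := by
  ext t
  simp only [Finset.mem_filter, Finset.mem_image, Finset.mem_univ, true_and]
  rw [toDFun_eq_false_iff f hf t]

lemma toD_card_false (f : ℕ → ℕ) (hm : Monotone f) (hf : ∀ i, f i ≤ i) :
    (Finset.univ.filter fun t : Fin (2 * n) => toDFun f t = false).card = n := by
  rw [toD_falseSet f hf,
    Finset.card_image_of_injective _ (sEmb_strictMono f hm hf).injective]
  simp

lemma toD_card_true (f : ℕ → ℕ) (hm : Monotone f) (hf : ∀ i, f i ≤ i) :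
    (Finset.univ.filter fun t : Fin (2 * n) => toDFun f t = true).card = n := by
  have h2 := Finset.card_filter_add_card_filter_not
    (s := Finset.univ) (p := fun t : Fin (2 * n) => toDFun f t = true)
  simp only [Finset.card_univ, Fintype.card_fin, Bool.not_eq_true] at h2
  have := toD_card_false (n := n) f hm hf
  omega

/-- generic: split `Iic k` by a boolean predicate -/
lemma filter_le_split (g : Fin (2 * n) → Bool) (k : Fin (2 * n)) :
    (Finset.univ.filter fun t : Fin (2 * n) => t ≤ k ∧ g t = true).card +
    (Finset.univ.filter fun t : Fin (2 * n) => t ≤ k ∧ g t = false).card = (k : ℕ) + 1 := by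
  have e1 : (Finset.univ.filter fun t : Fin (2 * n) => t ≤ k ∧ g t = true)
      = (Finset.Iic k).filter fun t => g t = true := by
    ext t; simp [Finset.mem_filter, and_comm]
  have e2 : (Finset.univ.filter fun t : Fin (2 * n) => t ≤ k ∧ g t = false)
      = (Finset.Iic k).filter fun t => ¬ (g t = true) := by
    ext t; simp [Finset.mem_filter, and_comm]
  rw [e1, e2, Finset.card_filter_add_card_filter_not, Fin.card_Iic]

lemma DyckPath.card_false (g : DyckPath n) :
    (Finset.univ.filter fun i => g.1 i = false).card = n := by
  have h2 := Finset.card_filter_add_card_filter_not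
    (s := Finset.univ) (p := fun i : Fin (2 * n) => g.1 i = true)
  simp only [Finset.card_univ, Fintype.card_fin, Bool.not_eq_true] at h2
  have := g.2.1
  omega

def toD (f : SFun n) : DyckPath n := by
  refine ⟨toDFun f.1, toD_card_true f.1 f.2.1 f.2.2.1, ?_⟩
  have hm := f.2.1
  have hf := f.2.2.1
  intro k
  have hsplit := filter_le_split (toDFun f.1) k
  have himg : (Finset.univ.filter fun t : Fin (2 * n) => t ≤ k ∧ toDFun f.1 t = false)
      = Finset.image (sEmb f.1 hf) (Finset.univ.filter fun i : Fin n => (i : ℕ) + f.1 i ≤ (k : ℕ)) := by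
    ext t
    simp only [Finset.mem_filter, Finset.mem_image, Finset.mem_univ, true_and]
    constructor
    · rintro ⟨hk, hfalse⟩
      obtain ⟨i, hi⟩ := (toDFun_eq_false_iff f.1 hf t).mp hfalse
      refine ⟨i, ?_, hi⟩
      have : (sEmb f.1 hf i : ℕ) = (i : ℕ) + f.1 i := rfl
      rw [← hi] at hk
      exact le_trans (le_of_eq this.symm) hk
    · rintro ⟨i, hik, hi⟩
      refine ⟨?_, (toDFun_eq_false_iff f.1 hf t).mpr ⟨i, hi⟩⟩
      show (t : ℕ) ≤ (k : ℕ)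
      rw [← hi]
      exact hik
  have hc : (Finset.univ.filter fun t : Fin (2 * n) => t ≤ k ∧ toDFun f.1 t = false).card
      = (Finset.univ.filter fun i : Fin n => (i : ℕ) + f.1 i ≤ (k : ℕ)).card := by
    rw [himg, Finset.card_image_of_injective _ (sEmb_strictMono f.1 hm hf).injective]
  -- lower bound on the number of easts in the prefix
  have hkn : (k : ℕ) < 2 * n := k.isLt
  have hn : 0 < n := by omega
  have hhalf : (k : ℕ) / 2 < n := by omega
  have hsub : Finset.Iic (⟨(k : ℕ) / 2, hhalf⟩ : Fin n)
      ⊆ Finset.univ.filter fun i : Fin n => (i : ℕ) + f.1 i ≤ (k : ℕ) := by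
    intro i hi
    simp only [Finset.mem_Iic, Fin.le_def] at hi
    simp only [Finset.mem_filter, Finset.mem_univ, true_and]
    have := hf i
    have : (i : ℕ) + f.1 i ≤ 2 * (i : ℕ) := by omega
    omega
  have hcard := Finset.card_le_card hsub
  rw [Fin.card_Iic] at hcard
  have hid : ((⟨(k : ℕ) / 2, hhalf⟩ : Fin n) : ℕ) = (k : ℕ) / 2 := rfl
  rw [hid] at hcard
  omega


lemma ofD_e_ge (g : DyckPath n) (i : Fin n) :
    (i : ℕ) ≤ ((Finset.univ.filter fun t => g.1 t = false).orderEmbOfFin g.card_false i : ℕ) := by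
  set e := (Finset.univ.filter fun t => g.1 t = false).orderEmbOfFin g.card_false with he
  have hsm : StrictMono fun i : Fin n => (e i : ℕ) := fun a b hab => e.strictMono hab
  have hn : 0 < n := i.pos
  have := strictMono_gap hsm (i : ℕ) ⟨0, hn⟩ i (by simp)
  omega

lemma ofD_range (g : DyckPath n) (t : Fin (2 * n)) :
    g.1 t = false ↔ ∃ i' : Fin n,
      (Finset.univ.filter fun t => g.1 t = false).orderEmbOfFin g.card_false i' = t := by
  set F := Finset.univ.filter fun t : Fin (2 * n) => g.1 t = false with hF
  have hrange := Finset.range_orderEmbOfFin F g.card_false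
  constructor
  · intro h
    have ht : t ∈ (F : Set (Fin (2 * n))) := by rw [hF]; simp [h]
    rw [← hrange] at ht
    exact Set.mem_range.mp ht
  · rintro ⟨i', rfl⟩
    have h2 : _ ∈ F := Finset.orderEmbOfFin_mem F g.card_false i'
    exact (Finset.mem_filter.mp h2).2

lemma ofD_count_lt (g : DyckPath n) (i : Fin n) :
    (Finset.univ.filter fun t : Fin (2 * n) =>
      (t : ℕ) < ((Finset.univ.filter fun t => g.1 t = false).orderEmbOfFin g.card_false i : ℕ)
        ∧ g.1 t = false).card = (i : ℕ) := by
  set e := (Finset.univ.filter fun t => g.1 t = false).orderEmbOfFin g.card_false with he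
  have himg : (Finset.univ.filter fun t : Fin (2 * n) => (t : ℕ) < (e i : ℕ) ∧ g.1 t = false)
      = Finset.image e (Finset.Iio i) := by
    ext t
    simp only [Finset.mem_filter, Finset.mem_image, Finset.mem_univ, true_and, Finset.mem_Iio]
    constructor
    · rintro ⟨hlt, hfalse⟩
      obtain ⟨i', rfl⟩ := (ofD_range g t).mp hfalse
      refine ⟨i', ?_, rfl⟩
      by_contra hge
      push_neg at hge
      have := e.strictMono.monotone hge
      rw [Fin.le_def] at this
      rw [← he] at hlt
      omega
    · rintro ⟨i', hlt, rfl⟩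
      have h1 : e i' < e i := e.strictMono hlt
      rw [Fin.lt_def] at h1
      exact ⟨h1, (ofD_range g (e i')).mpr ⟨i', rfl⟩⟩
  rw [himg, Finset.card_image_of_injective _ e.injective, Fin.card_Iio]

lemma ofD_e_le (g : DyckPath n) (i : Fin n) :
    ((Finset.univ.filter fun t => g.1 t = false).orderEmbOfFin g.card_false i : ℕ) ≤ 2 * i := by
  set e := (Finset.univ.filter fun t => g.1 t = false).orderEmbOfFin g.card_false with he
  set p := (e i : ℕ) with hp
  rcases Nat.eq_zero_or_pos p with hp0 | hp0
  · omega
  · have hpk : p - 1 < 2 * n := by have := (e i).isLt; omega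
    set k : Fin (2 * n) := ⟨p - 1, hpk⟩ with hk
    have hcond := g.2.2 k
    have hconv : ∀ b : Bool, (Finset.univ.filter fun t : Fin (2 * n) => t ≤ k ∧ g.1 t = b)
        = Finset.univ.filter fun t : Fin (2 * n) => (t : ℕ) < p ∧ g.1 t = b := by
      intro b
      apply Finset.filter_congr
      intro t _
      have : (t ≤ k) ↔ (t : ℕ) ≤ p - 1 := Iff.rfl
      rw [this]
      constructor
      · rintro ⟨h1, h2⟩; exact ⟨by omega, h2⟩
      · rintro ⟨h1, h2⟩; exact ⟨by omega, h2⟩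
    have hsplit : (Finset.univ.filter fun t : Fin (2 * n) => t ≤ k ∧ g.1 t = true).card +
        (Finset.univ.filter fun t : Fin (2 * n) => t ≤ k ∧ g.1 t = false).card = (k : ℕ) + 1 :=
      filter_le_split g.1 k
    have hcount := ofD_count_lt g i
    rw [hconv true, hconv false] at hcond hsplit
    rw [← he, ← hp] at hcount
    have hkval : (k : ℕ) = p - 1 := rfl
    omega

/-- `eFun g m` is the position of the `m`-th east step of `g` (0 if `m ≥ n`). -/
def eFun (g : DyckPath n) : ℕ → ℕ := fun m =>
  if h : m < n
  then ((Finset.univ.filter fun t => g.1 t = false).orderEmbOfFin g.card_false ⟨m, h⟩ : ℕ)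
  else 0

lemma eFun_eq (g : DyckPath n) (i : Fin n) :
    eFun g (i : ℕ)
      = ((Finset.univ.filter fun t => g.1 t = false).orderEmbOfFin g.card_false i : ℕ) := by
  simp [eFun, i.isLt]

lemma eFun_gap (g : DyckPath n) (a b : ℕ) (hab : a ≤ b) (hb : b < n) :
    eFun g a + (b - a) ≤ eFun g b := by
  have ha : a < n := by omega
  set e := (Finset.univ.filter fun t => g.1 t = false).orderEmbOfFin g.card_false with he
  have hsm : StrictMono fun i : Fin n => (e i : ℕ) := fun x y hxy => e.strictMono hxy
  have := strictMono_gap hsm (b - a) ⟨a, ha⟩ ⟨b, hb⟩ (by simp; omega)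
  simp only [eFun, dif_pos ha, dif_pos hb, ← he]
  omega

lemma eFun_ge (g : DyckPath n) (a : ℕ) (ha : a < n) : a ≤ eFun g a := by
  have := ofD_e_ge g ⟨a, ha⟩
  simp only [eFun, dif_pos ha]
  exact this

lemma eFun_le (g : DyckPath n) (a : ℕ) (ha : a < n) : eFun g a ≤ 2 * a := by
  have := ofD_e_le g ⟨a, ha⟩
  simp only [eFun, dif_pos ha]
  exact this

def ofDFun (g : DyckPath n) : ℕ → ℕ := fun m => eFun g (min m (n - 1)) - min m (n - 1)

def ofD (g : DyckPath n) : SFun n := by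
  refine ⟨ofDFun g, ?_, ?_, ?_⟩
  · intro m m' hmm
    simp only [ofDFun]
    rcases Nat.eq_zero_or_pos n with hn | hn
    · simp [hn, eFun]
    · have h1 := eFun_gap g (min m (n - 1)) (min m' (n - 1)) (by omega) (by omega)
      have h2 := eFun_ge g (min m (n - 1)) (by omega)
      omega
  · intro m
    simp only [ofDFun]
    rcases Nat.eq_zero_or_pos n with hn | hn
    · simp [hn, eFun]
    · have h1 := eFun_le g (min m (n - 1)) (by omega)
      omega
  · intro m hm
    simp only [ofDFun]
    have : min m (n - 1) = n - 1 := by omega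
    rw [this]
    have : min (n - 1) (n - 1) = n - 1 := by omega
    rw [this]

lemma toD_emb (f : SFun n) :
    sEmb f.1 f.2.2.1 = ⇑((Finset.univ.filter fun t => (toD f).1 t = false).orderEmbOfFin
      (toD f).card_false) := by
  apply Finset.orderEmbOfFin_unique
  · intro x
    simp only [Finset.mem_filter, Finset.mem_univ, true_and]
    show toDFun f.1 _ = false
    exact (toDFun_eq_false_iff f.1 f.2.2.1 _).mpr ⟨x, rfl⟩
  · exact sEmb_strictMono f.1 f.2.1 f.2.2.1

lemma ofD_toD (f : SFun n) : ofD (toD f) = f := by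
  apply Subtype.ext
  funext m
  show ofDFun (toD f) m = f.1 m
  have hm := f.2.1
  have hf := f.2.2.1
  have htail := f.2.2.2
  rcases Nat.eq_zero_or_pos n with hn | hn
  · have h1 : ofDFun (toD f) m = 0 := by simp [ofDFun, eFun, hn]
    have h2 : f.1 m = f.1 (n - 1) := htail m (by omega)
    have h3 : f.1 (n - 1) = 0 := by have := hf (n - 1); omega
    omega
  · set μ := min m (n - 1) with hμ
    have hμn : μ < n := by omega
    have he : eFun (toD f) μ = μ + f.1 μ := by
      rw [show eFun (toD f) μ = ((Finset.univ.filter fun t => (toD f).1 t = false).orderEmbOfFin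
        (toD f).card_false ⟨μ, hμn⟩ : ℕ) from by simp [eFun, hμn]]
      rw [← congrFun (toD_emb f) ⟨μ, hμn⟩]
      rfl
    have hfm : f.1 μ = f.1 m := by
      rcases le_or_gt m (n - 1) with h | h
      · rw [hμ, min_eq_left h]
      · rw [hμ, min_eq_right (by omega)]
        exact (htail m (by omega)).symm
    show eFun (toD f) μ - μ = f.1 m
    omega

lemma toD_ofD (g : DyckPath n) : toD (ofD g) = g := by
  apply Subtype.ext
  funext t
  show toDFun (ofD g).1 t = g.1 t
  have hf : ∀ i, (ofD g).1 i ≤ i := (ofD g).2.2.1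
  have hkey : ∀ i : Fin n, sEmb (ofD g).1 hf i
      = (Finset.univ.filter fun t => g.1 t = false).orderEmbOfFin g.card_false i := by
    intro i
    apply Fin.ext
    show (i : ℕ) + (ofD g).1 (i : ℕ) = _
    have h1 : (ofD g).1 (i : ℕ) = eFun g (i : ℕ) - (i : ℕ) := by
      show ofDFun g (i : ℕ) = _
      rw [ofDFun, min_eq_left (by have := i.isLt; omega)]
    have h2 := eFun_ge g (i : ℕ) i.isLt
    have h3 := eFun_eq g i
    omega
  have hiff : toDFun (ofD g).1 t = false ↔ g.1 t = false := by
    rw [toDFun_eq_false_iff (ofD g).1 hf t, ofD_range g t]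
    constructor
    · rintro ⟨i, hi⟩; exact ⟨i, by rw [← hkey i]; exact hi⟩
    · rintro ⟨i, hi⟩; exact ⟨i, by rw [hkey i]; exact hi⟩
  cases h1 : toDFun (ofD g).1 t <;> cases h2 : g.1 t <;> simp_all

def equivSD (n : ℕ) : SFun n ≃ DyckPath n := ⟨toD, ofD, ofD_toD, toD_ofD⟩

open DyckStep

lemma count_ofFn' {α : Type*} [DecidableEq α] {m : ℕ} (v : Fin m → α) (a : α) :
    (List.ofFn v).count a = (Finset.univ.filter fun t : Fin m => v t = a).card := by
  have := count_take_ofFn v a m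
  rw [List.take_of_length_le (by simp)] at this
  rw [this]
  congr 1
  apply Finset.filter_congr
  intro t _
  simp [t.isLt]

variable {n : ℕ}

/-- the core prefix inequality, for arbitrary `i : ℕ`. -/
lemma DyckPath.prefix_le (g : DyckPath n) (i : ℕ) :
    (Finset.univ.filter fun t : Fin (2 * n) => (t : ℕ) < i ∧ g.1 t = true).card ≤
    (Finset.univ.filter fun t : Fin (2 * n) => (t : ℕ) < i ∧ g.1 t = false).card := by
  rcases Nat.eq_zero_or_pos i with rfl | hi
  · simp
  by_cases h2 : i ≤ 2 * n
  · have hk : i - 1 < 2 * n := by omega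
    have := g.2.2 ⟨i - 1, hk⟩
    have he : ∀ b : Bool, (Finset.univ.filter fun t : Fin (2 * n) => (t : ℕ) < i ∧ g.1 t = b)
        = Finset.univ.filter fun t : Fin (2 * n) => t ≤ ⟨i - 1, hk⟩ ∧ g.1 t = b := by
      intro b
      apply Finset.filter_congr
      intro t _
      have : (t ≤ (⟨i - 1, hk⟩ : Fin (2 * n))) ↔ (t : ℕ) ≤ i - 1 := Iff.rfl
      rw [this]
      constructor
      · rintro ⟨h, hb⟩; exact ⟨by omega, hb⟩
      · rintro ⟨h, hb⟩; exact ⟨by omega, hb⟩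
    rw [he true, he false]
    exact this
  · have he : ∀ b : Bool, (Finset.univ.filter fun t : Fin (2 * n) => (t : ℕ) < i ∧ g.1 t = b)
        = Finset.univ.filter fun t : Fin (2 * n) => g.1 t = b := by
      intro b
      apply Finset.filter_congr
      intro t _
      have := t.isLt
      constructor
      · rintro ⟨-, hb⟩; exact hb
      · intro hb; exact ⟨by omega, hb⟩
    rw [he true, he false, g.2.1, g.card_false]

def pathToWord (g : DyckPath n) : DyckWord where
  toList := List.ofFn (fun t : Fin (2 * n) => if g.1 t then D else U)
  count_U_eq_count_D := by
    rw [count_ofFn', count_ofFn']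
    have h1 : (Finset.univ.filter fun t : Fin (2 * n) => (if g.1 t then D else U) = U)
        = Finset.univ.filter fun t : Fin (2 * n) => g.1 t = false := by
      apply Finset.filter_congr; intro t _; cases h : g.1 t <;> simp
    have h2 : (Finset.univ.filter fun t : Fin (2 * n) => (if g.1 t then D else U) = D)
        = Finset.univ.filter fun t : Fin (2 * n) => g.1 t = true := by
      apply Finset.filter_congr; intro t _; cases h : g.1 t <;> simp
    rw [h1, h2, g.2.1, g.card_false]
  count_D_le_count_U i := by
    rw [count_take_ofFn, count_take_ofFn]
    have h1 : (Finset.univ.filter fun t : Fin (2 * n) => (t : ℕ) < i ∧ (if g.1 t then D else U) = U)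
        = Finset.univ.filter fun t : Fin (2 * n) => (t : ℕ) < i ∧ g.1 t = false := by
      apply Finset.filter_congr; intro t _; cases h : g.1 t <;> simp
    have h2 : (Finset.univ.filter fun t : Fin (2 * n) => (t : ℕ) < i ∧ (if g.1 t then D else U) = D)
        = Finset.univ.filter fun t : Fin (2 * n) => (t : ℕ) < i ∧ g.1 t = true := by
      apply Finset.filter_congr; intro t _; cases h : g.1 t <;> simp
    rw [h1, h2]
    exact g.prefix_le i

lemma pathToWord_semilength (g : DyckPath n) : (pathToWord g).semilength = n := by
  rw [DyckWord.semilength_eq_count_D]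
  show (List.ofFn (fun t : Fin (2 * n) => if g.1 t then D else U)).count D = n
  rw [count_ofFn']
  have h2 : (Finset.univ.filter fun t : Fin (2 * n) => (if g.1 t then D else U) = D)
      = Finset.univ.filter fun t : Fin (2 * n) => g.1 t = true := by
    apply Finset.filter_congr; intro t _; cases h : g.1 t <;> simp
  rw [h2, g.2.1]

lemma len_eq (p : DyckWord) (h : p.semilength = n) : p.toList.length = 2 * n := by
  rw [← p.two_mul_semilength_eq_length, h]

def wordToPathFun (p : DyckWord) (h : p.toList.length = 2 * n) : Fin (2 * n) → Bool :=
  fun t => decide (p.toList[(t : ℕ)]'(by rw [h]; exact t.isLt) = D)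

def wordToPath (p : DyckWord) (h : p.semilength = n) : DyckPath n := by
  have hlen : p.toList.length = 2 * n := len_eq p h
  set v : Fin (2 * n) → DyckStep := fun t => p.toList[(t : ℕ)]'(by rw [hlen]; exact t.isLt) with hv
  have hofn : List.ofFn v = p.toList := by
    apply List.ext_getElem (by simpa using hlen.symm)
    intro i h1 h2
    simp [hv]
  refine ⟨wordToPathFun p hlen, ?_, ?_⟩
  · have : p.toList.count D = n := by rw [← DyckWord.semilength_eq_count_D, h]
    rw [← hofn, count_ofFn'] at this
    have hq : (Finset.univ.filter fun i => wordToPathFun p hlen i = true)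
        = Finset.univ.filter fun t : Fin (2 * n) => v t = D := by
      apply Finset.filter_congr
      intro t _
      simp [wordToPathFun, hv]
    rw [hq, this]
  · intro k
    have := p.count_D_le_count_U ((k : ℕ) + 1)
    rw [← hofn, count_take_ofFn, count_take_ofFn] at this
    have he : ∀ s : DyckStep, ∀ b : Bool, (decide (s = D) = b) = (s = (if b then D else U)) := by
      rintro s b
      cases s <;> cases b <;> simp
    have h1 : (Finset.univ.filter fun t : Fin (2 * n) => t ≤ k ∧ wordToPathFun p hlen t = true)
        = Finset.univ.filter fun t : Fin (2 * n) => (t : ℕ) < (k : ℕ) + 1 ∧ v t = D := by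
      apply Finset.filter_congr; intro t _
      show _ ↔ _
      rw [show wordToPathFun p hlen t = decide (v t = D) from rfl, he (v t) true]
      simp only [if_pos]
      constructor
      · rintro ⟨h', hb⟩; exact ⟨by exact Nat.lt_succ_of_le h', hb⟩
      · rintro ⟨h', hb⟩; exact ⟨Nat.lt_succ_iff.mp h', hb⟩
    have h2 : (Finset.univ.filter fun t : Fin (2 * n) => t ≤ k ∧ wordToPathFun p hlen t = false)
        = Finset.univ.filter fun t : Fin (2 * n) => (t : ℕ) < (k : ℕ) + 1 ∧ v t = U := by
      apply Finset.filter_congr; intro t _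
      show _ ↔ _
      rw [show wordToPathFun p hlen t = decide (v t = D) from rfl, he (v t) false]
      simp only [if_neg Bool.false_ne_true]
      constructor
      · rintro ⟨h', hb⟩; exact ⟨by exact Nat.lt_succ_of_le h', hb⟩
      · rintro ⟨h', hb⟩; exact ⟨Nat.lt_succ_iff.mp h', hb⟩
    rw [h1, h2]
    exact this

def equivPathWord (n : ℕ) : DyckPath n ≃ {p : DyckWord // p.semilength = n} where
  toFun g := ⟨pathToWord g, pathToWord_semilength g⟩
  invFun p := wordToPath p.1 p.2
  left_inv g := by
    apply Subtype.ext
    funext t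
    show decide ((List.ofFn (fun t : Fin (2 * n) => if g.1 t then D else U))[(t : ℕ)]'(by simpa using t.isLt) = D) = g.1 t
    rw [List.getElem_ofFn]
    cases h : g.1 t <;> simp [h]
  right_inv p := by
    apply Subtype.ext
    apply DyckWord.ext
    have hlen : p.1.toList.length = 2 * n := len_eq p.1 p.2
    show List.ofFn (fun t : Fin (2 * n) =>
      if wordToPathFun p.1 hlen t then D else U) = p.1.toList
    apply List.ext_getElem (by simp [hlen])
    intro i h1 h2
    rw [List.getElem_ofFn]
    rcases (p.1.toList[i]'h2).dichotomy with hd | hd <;> simp [wordToPathFun, hd]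

theorem stmt6 (n : ℕ) :
    Nonempty (JonesNF n ≃ DyckPath n) ∧
    Nat.card (JonesNF n) = (2 * n).choose n / (n + 1) := by
  have e : JonesNF n ≃ DyckPath n := (equivJS n).trans (equivSD n)
  constructor
  · exact ⟨e⟩
  · rw [Nat.card_congr (e.trans (equivPathWord n)), Nat.card_eq_fintype_card,
      DyckWord.card_dyckWord_semilength_eq_catalan, catalan_eq_centralBinom_div]
    rfl
end

section
/- A permutation w of {1,…,n} is 321-avoiding (has no indices i < j < k with w(i) > w(j) > w(k)) if and only if w is fully commutative, i.e. any two reduced expressions of w in the Coxeter generators s_1,…,s_{n-1} are related by a sequence of commutations s_i s_j = s_j s_i with |i-j| > 1. -/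
/-- The Coxeter generator `s_i = (i, i+1)` of the symmetric group on `Fin n`. -/
def cox (n : ℕ) (i : Fin (n - 1)) : Equiv.Perm (Fin n) :=
  Equiv.swap ⟨(i : ℕ), lt_of_lt_of_le i.isLt (Nat.sub_le n 1)⟩
    ⟨(i : ℕ) + 1, by have := i.isLt; omega⟩

/-- Evaluation of a word in the Coxeter generators. -/
def wordProd (n : ℕ) (l : List (Fin (n - 1))) : Equiv.Perm (Fin n) :=
  (l.map (cox n)).prod

/-- A reduced expression of `w`: a word of minimal length with product `w`. -/
def IsReducedWord (n : ℕ) (w : Equiv.Perm (Fin n)) (l : List (Fin (n - 1))) : Prop :=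
  wordProd n l = w ∧ ∀ l' : List (Fin (n - 1)), wordProd n l' = w → l.length ≤ l'.length

/-- A single commutation move `… s_i s_j … ↦ … s_j s_i …` with `|i - j| > 1`. -/
def CommMove (n : ℕ) (l l' : List (Fin (n - 1))) : Prop :=
  ∃ (a b : List (Fin (n - 1))) (i j : Fin (n - 1)),
    ((i : ℕ) + 1 < j ∨ (j : ℕ) + 1 < i) ∧
    l = a ++ i :: j :: b ∧ l' = a ++ j :: i :: b

/-- `w` is fully commutative: any two reduced expressions of `w` are related by a
sequence of commutation moves. -/
def FullyCommutative (n : ℕ) (w : Equiv.Perm (Fin n)) : Prop :=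
  ∀ l l' : List (Fin (n - 1)), IsReducedWord n w l → IsReducedWord n w l' →
    Relation.ReflTransGen (CommMove n) l l'

/-- `w` is 321-avoiding. -/
def Avoids321 (n : ℕ) (w : Equiv.Perm (Fin n)) : Prop :=
  ¬ ∃ i j k : Fin n, i < j ∧ j < k ∧ w k < w j ∧ w j < w i

namespace FCaux

variable {n : ℕ}

/-- lower endpoint of generator `i` as an element of `Fin n`. -/
def lo (i : Fin (n - 1)) : Fin n := ⟨(i : ℕ), lt_of_lt_of_le i.isLt (Nat.sub_le n 1)⟩

def hi (i : Fin (n - 1)) : Fin n := ⟨(i : ℕ) + 1, by have := i.isLt; omega⟩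

lemma cox_eq (i : Fin (n-1)) : cox n i = Equiv.swap (lo i) (hi i) := rfl

@[simp] lemma lo_val (i : Fin (n-1)) : (lo i : ℕ) = (i : ℕ) := rfl
@[simp] lemma hi_val (i : Fin (n-1)) : (hi i : ℕ) = (i : ℕ) + 1 := rfl

lemma lo_ne_hi (i : Fin (n-1)) : lo i ≠ hi i := by
  simp [Fin.ext_iff]

lemma cox_mul_self (i : Fin (n-1)) : cox n i * cox n i = 1 := by
  rw [cox_eq]; exact Equiv.swap_mul_self _ _

@[simp] lemma wordProd_nil : wordProd n ([] : List (Fin (n-1))) = 1 := rfl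

@[simp] lemma wordProd_cons (i : Fin (n-1)) (l : List (Fin (n-1))) :
    wordProd n (i :: l) = cox n i * wordProd n l := by
  simp [wordProd]

/-- Number of inversions. -/
def Inv (w : Equiv.Perm (Fin n)) : ℕ :=
  ((Finset.univ : Finset (Fin n × Fin n)).filter fun p => p.1 < p.2 ∧ w p.2 < w p.1).card

/-- `i` is a left descent of `w`. -/
def Des (i : Fin (n-1)) (w : Equiv.Perm (Fin n)) : Prop := w⁻¹ (hi i) < w⁻¹ (lo i)

lemma swap_val (i : Fin (n-1)) (x : Fin n) :
    ((Equiv.swap (lo i) (hi i) x : Fin n) : ℕ) =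
      if (x : ℕ) = (i : ℕ) then (i : ℕ) + 1
      else if (x : ℕ) = (i : ℕ) + 1 then (i : ℕ) else (x : ℕ) := by
  rcases eq_or_ne x (lo i) with h | h
  · subst h; rw [Equiv.swap_apply_left]; simp
  · rcases eq_or_ne x (hi i) with h2 | h2
    · subst h2; rw [Equiv.swap_apply_right]
      have : (i:ℕ) + 1 ≠ (i:ℕ) := by omega
      simp [this]
    · rw [Equiv.swap_apply_of_ne_of_ne h h2]
      simp [Fin.ext_iff] at h h2
      rw [if_neg h, if_neg h2]

/-- swap preserves the order of a pair unless the pair is exactly `(hi, lo)` with values. -/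
lemma swap_lt_swap {i : Fin (n-1)} {u v : Fin n} (huv : v < u)
    (hne : ¬ (u = hi i ∧ v = lo i)) :
    Equiv.swap (lo i) (hi i) v < Equiv.swap (lo i) (hi i) u := by
  have h1 := swap_val i u
  have h2 := swap_val i v
  rw [Fin.lt_def] at huv ⊢
  simp only [Fin.ext_iff, lo_val, hi_val] at hne
  have hu := u.isLt
  have := (hi i).isLt
  split_ifs at h1 h2 <;> omega

lemma swap_lt_swap_iff {i : Fin (n-1)} {u v : Fin n}
    (h1 : ¬ (u = hi i ∧ v = lo i)) (h2 : ¬ (v = hi i ∧ u = lo i)) :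
    Equiv.swap (lo i) (hi i) v < Equiv.swap (lo i) (hi i) u ↔ v < u := by
  constructor
  · intro h
    rcases lt_trichotomy v u with h' | h' | h'
    · exact h'
    · subst h'; simp at h
    · exact absurd (swap_lt_swap h' h2) (by simp [not_lt, le_of_lt h])
  · intro h; exact swap_lt_swap h h1

end FCaux

namespace FCaux
variable {n : ℕ}

def S (w : Equiv.Perm (Fin n)) : Finset (Fin n × Fin n) :=
  (Finset.univ : Finset (Fin n × Fin n)).filter fun p => p.1 < p.2 ∧ w p.2 < w p.1

lemma Inv_eq_card (w : Equiv.Perm (Fin n)) : Inv w = (S w).card := rfl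

lemma mem_S {w : Equiv.Perm (Fin n)} {p : Fin n × Fin n} :
    p ∈ S w ↔ p.1 < p.2 ∧ w p.2 < w p.1 := by simp [S]

lemma inv_ne (w : Equiv.Perm (Fin n)) (i : Fin (n-1)) : w⁻¹ (lo i) ≠ w⁻¹ (hi i) :=
  fun h => lo_ne_hi i (w.injective (by simpa using congrArg w h))

lemma inv_des {w : Equiv.Perm (Fin n)} {i : Fin (n-1)} (h : Des i w) :
    Inv (cox n i * w) + 1 = Inv w := by
  set P : Fin n × Fin n := (w⁻¹ (hi i), w⁻¹ (lo i)) with hP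
  have hPS : P ∈ S w := by
    rw [mem_S]
    refine ⟨h, ?_⟩
    simp [hP, Fin.lt_def]
  have hset : S (cox n i * w) = (S w).erase P := by
    ext p
    rw [mem_S, Finset.mem_erase, mem_S]
    simp only [cox_eq, Equiv.Perm.mul_apply]
    constructor
    · rintro ⟨h12, hlt⟩
      have hne1 : ¬ (w p.1 = hi i ∧ w p.2 = lo i) := by
        rintro ⟨e1, e2⟩
        have : p = P := by
          rw [hP, Prod.ext_iff]
          exact ⟨by rw [← e1]; simp, by rw [← e2]; simp⟩
        subst this
        simp [hP, e1, e2] at hlt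
        exact absurd hlt (by simp [Fin.lt_def])
      have hne2 : ¬ (w p.2 = hi i ∧ w p.1 = lo i) := by
        rintro ⟨e1, e2⟩
        have h1 : p.1 = w⁻¹ (lo i) := by rw [← e2]; simp
        have h2 : p.2 = w⁻¹ (hi i) := by rw [← e1]; simp
        rw [h1, h2] at h12
        exact absurd h (asymm h12)
      refine ⟨?_, h12, (swap_lt_swap_iff hne1 hne2).mp hlt⟩
      rintro rfl
      simp only [hP] at hlt
      simp only [Equiv.Perm.coe_inv, Equiv.apply_symm_apply] at hlt
      rw [Equiv.swap_apply_left, Equiv.swap_apply_right] at hlt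
      exact absurd hlt (by simp [Fin.lt_def])
    · rintro ⟨hne, h12, hlt⟩
      refine ⟨h12, swap_lt_swap hlt ?_⟩
      rintro ⟨e1, e2⟩
      exact hne (by rw [hP, Prod.ext_iff]; exact ⟨by rw [← e1]; simp, by rw [← e2]; simp⟩)
  rw [Inv_eq_card, Inv_eq_card, hset, Finset.card_erase_of_mem hPS]
  have := Finset.card_pos.mpr ⟨P, hPS⟩
  omega

lemma inv_asc {w : Equiv.Perm (Fin n)} {i : Fin (n-1)} (h : ¬ Des i w) :
    Inv (cox n i * w) = Inv w + 1 := by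
  have hlt : w⁻¹ (lo i) < w⁻¹ (hi i) := by
    rcases lt_or_eq_of_le (not_lt.mp h) with h' | h'
    · exact h'
    · exact absurd h' (inv_ne w i)
  set Q : Fin n × Fin n := (w⁻¹ (lo i), w⁻¹ (hi i)) with hQ
  have hQS : Q ∉ S w := by
    rw [mem_S]
    rintro ⟨-, hc⟩
    simp [hQ, Fin.lt_def] at hc
  have hset : S (cox n i * w) = insert Q (S w) := by
    ext p
    rw [mem_S, Finset.mem_insert, mem_S]
    simp only [cox_eq, Equiv.Perm.mul_apply]
    constructor
    · rintro ⟨h12, hl⟩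
      rcases eq_or_ne p Q with rfl | hpQ
      · exact Or.inl rfl
      refine Or.inr ⟨h12, ?_⟩
      have hne1 : ¬ (w p.1 = hi i ∧ w p.2 = lo i) := by
        rintro ⟨e1, e2⟩
        have h1 : p.1 = w⁻¹ (hi i) := by rw [← e1]; simp
        have h2 : p.2 = w⁻¹ (lo i) := by rw [← e2]; simp
        rw [h1, h2] at h12
        exact absurd h12 (asymm hlt)
      have hne2 : ¬ (w p.2 = hi i ∧ w p.1 = lo i) := by
        rintro ⟨e1, e2⟩
        exact hpQ (by rw [hQ, Prod.ext_iff]; exact ⟨by rw [← e2]; simp, by rw [← e1]; simp⟩)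
      exact (swap_lt_swap_iff hne1 hne2).mp hl
    · rintro (rfl | ⟨h12, hl⟩)
      · refine ⟨hlt, ?_⟩
        simp only [hQ, Equiv.Perm.coe_inv, Equiv.apply_symm_apply]
        rw [Equiv.swap_apply_left, Equiv.swap_apply_right]
        simp [Fin.lt_def]
      · refine ⟨h12, swap_lt_swap hl ?_⟩
        rintro ⟨e1, e2⟩
        have h1 : p.1 = w⁻¹ (hi i) := by rw [← e1]; simp
        have h2 : p.2 = w⁻¹ (lo i) := by rw [← e2]; simp
        rw [h1, h2] at h12
        exact absurd h12 (asymm hlt)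
  rw [Inv_eq_card, Inv_eq_card, hset, Finset.card_insert_of_notMem hQS]

end FCaux

namespace FCaux
variable {n : ℕ}

lemma inv_cox_mul_le (i : Fin (n-1)) (w : Equiv.Perm (Fin n)) :
    Inv (cox n i * w) ≤ Inv w + 1 := by
  by_cases h : Des i w
  · have := inv_des h; omega
  · exact (inv_asc h).le

lemma inv_le_length (l : List (Fin (n-1))) : Inv (wordProd n l) ≤ l.length := by
  induction l with
  | nil =>
    rw [wordProd_nil]
    have : S (1 : Equiv.Perm (Fin n)) = ∅ := by
      ext p
      simp only [mem_S, Finset.notMem_empty, iff_false, not_and, Equiv.Perm.one_apply]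
      intro h
      exact asymm h
    simp [Inv_eq_card, this]
  | cons i t ih =>
    rw [wordProd_cons]
    calc Inv (cox n i * wordProd n t) ≤ Inv (wordProd n t) + 1 := inv_cox_mul_le _ _
    _ ≤ t.length + 1 := by omega
    _ = (i :: t).length := by simp

lemma eq_one_of_inv_eq_zero {w : Equiv.Perm (Fin n)} (h : Inv w = 0) : w = 1 := by
  have hS : S w = ∅ := Finset.card_eq_zero.mp h
  have hmono : StrictMono w := by
    intro x y hxy
    rcases lt_trichotomy (w x) (w y) with h' | h' | h'
    · exact h'
    · exact absurd (w.injective h') (ne_of_lt hxy)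
    · exact absurd ((mem_S (w := w) (p := (x, y))).mpr ⟨hxy, h'⟩) (by simp [hS])
  have hmono' : StrictMono ⇑w⁻¹ := by
    intro x y hxy
    rcases lt_trichotomy (w⁻¹ x) (w⁻¹ y) with h' | h' | h'
    · exact h'
    · exact absurd (w⁻¹.injective h') (ne_of_lt hxy)
    · have := hmono h'
      simp only [Equiv.Perm.coe_inv, Equiv.apply_symm_apply] at this
      exact absurd hxy (asymm this)
  haveI : WellFoundedLT (Fin n) := Finite.to_wellFoundedLT
  ext x
  have h1 : x ≤ w x := hmono.le_apply
  have h2 : w x ≤ w⁻¹ (w x) := hmono'.le_apply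
  simp only [Equiv.Perm.coe_inv, Equiv.symm_apply_apply] at h2
  simp only [Equiv.Perm.one_apply]
  exact le_antisymm h2 h1

lemma chain (w : Equiv.Perm (Fin n)) :
    ∀ (d a b : ℕ) (_ : a + d = b) (_ : d ≠ 0) (hb : b < n),
      (w⁻¹ ⟨b, hb⟩ : Fin n) < w⁻¹ ⟨a, by omega⟩ →
      ∃ i : Fin (n-1), a ≤ (i : ℕ) ∧ (i : ℕ) + 1 ≤ b ∧ Des i w := by
  intro d
  induction d with
  | zero => intro a b h h0; omega
  | succ d ih =>
    intro a b hab h0 hb hlt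
    have ha1 : a + 1 < n := by omega
    have han : a < n - 1 := by omega
    set ia : Fin (n-1) := ⟨a, han⟩ with hia
    by_cases hdes : Des ia w
    · exact ⟨ia, le_refl _, by simp [hia]; omega, hdes⟩
    · have hne : w⁻¹ (lo ia) ≠ w⁻¹ (hi ia) := inv_ne w ia
      have hord : w⁻¹ (lo ia) < w⁻¹ (hi ia) := by
        rcases lt_or_eq_of_le (not_lt.mp hdes) with h' | h'
        · exact h'
        · exact absurd h' hne
      rcases Nat.eq_zero_or_pos d with rfl | hd
      · exfalso
        have hb' : b = a + 1 := by omega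
        subst hb'
        have : w⁻¹ ⟨a + 1, hb⟩ = w⁻¹ (hi ia) := rfl
        rw [this] at hlt
        have : w⁻¹ ⟨a, by omega⟩ = w⁻¹ (lo ia) := rfl
        rw [this] at hlt
        exact absurd hlt (asymm hord)
      · have hab' : (a + 1) + d = b := by omega
        have hlt' : (w⁻¹ ⟨b, hb⟩ : Fin n) < w⁻¹ ⟨a + 1, by omega⟩ := by
          calc (w⁻¹ ⟨b, hb⟩ : Fin n) < w⁻¹ ⟨a, by omega⟩ := hlt
          _ < w⁻¹ ⟨a + 1, by omega⟩ := hord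
        obtain ⟨i, hi1, hi2, hi3⟩ := ih (a+1) b hab' (by omega) hb hlt'
        exact ⟨i, by omega, hi2, hi3⟩

lemma exists_des {w : Equiv.Perm (Fin n)} (h : Inv w ≠ 0) : ∃ i : Fin (n-1), Des i w := by
  have : (S w).Nonempty := Finset.card_pos.mp (Nat.pos_of_ne_zero h)
  obtain ⟨p, hp⟩ := this
  rw [mem_S] at hp
  obtain ⟨h12, hlt⟩ := hp
  have hb : ((w p.1 : Fin n) : ℕ) < n := (w p.1).isLt
  have ha : ((w p.2 : Fin n) : ℕ) < n := (w p.2).isLt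
  have key := chain w ((w p.1 : ℕ) - (w p.2 : ℕ)) (w p.2) (w p.1)
    (by have := Fin.lt_def.mp hlt; omega) (by have := Fin.lt_def.mp hlt; omega) hb
  have e1 : (⟨(w p.1 : ℕ), hb⟩ : Fin n) = w p.1 := Fin.eta _ _
  have e2 : (⟨(w p.2 : ℕ), by omega⟩ : Fin n) = w p.2 := Fin.eta _ _
  rw [e1, e2] at key
  simp only [Equiv.Perm.coe_inv, Equiv.symm_apply_apply] at key
  obtain ⟨i, _, _, hdes⟩ := key h12
  exact ⟨i, hdes⟩

lemma exists_reduced_len (w : Equiv.Perm (Fin n)) :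
    ∃ l : List (Fin (n-1)), wordProd n l = w ∧ l.length = Inv w := by
  generalize hN : Inv w = N
  induction N using Nat.strong_induction_on generalizing w with
  | _ N ih =>
    rcases Nat.eq_zero_or_pos N with rfl | hpos
    · exact ⟨[], by rw [wordProd_nil, eq_one_of_inv_eq_zero hN], rfl⟩
    · obtain ⟨i, hdes⟩ := exists_des (by omega : Inv w ≠ 0)
      have hinv := inv_des hdes
      obtain ⟨m, hm1, hm2⟩ := ih (Inv (cox n i * w)) (by omega) (cox n i * w) rfl
      refine ⟨i :: m, ?_, by simp [hm2]; omega⟩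
      rw [wordProd_cons, hm1, ← mul_assoc, cox_mul_self, one_mul]

lemma reduced_iff {w : Equiv.Perm (Fin n)} {l : List (Fin (n-1))} :
    IsReducedWord n w l ↔ wordProd n l = w ∧ l.length = Inv w := by
  constructor
  · rintro ⟨h1, h2⟩
    obtain ⟨l₀, hl₀, hlen⟩ := exists_reduced_len w
    have := h2 l₀ hl₀
    have := inv_le_length l
    rw [h1] at this
    exact ⟨h1, by omega⟩
  · rintro ⟨h1, h2⟩
    refine ⟨h1, fun l' hl' => ?_⟩
    have := inv_le_length l'
    rw [hl'] at this
    omega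
end FCaux

namespace FCaux
variable {n : ℕ}

lemma cox_comm {i j : Fin (n-1)} (h : (i : ℕ) + 1 < (j : ℕ) ∨ (j : ℕ) + 1 < (i : ℕ)) :
    cox n i * cox n j = cox n j * cox n i := by
  ext x
  rw [cox_eq, cox_eq]
  simp only [Equiv.Perm.mul_apply]
  rw [swap_val, swap_val, swap_val, swap_val]
  split_ifs <;> omega

lemma cox_braid {i j : Fin (n-1)} (hij : (i : ℕ) + 1 = (j : ℕ)) :
    cox n i * cox n j * cox n i = cox n j * cox n i * cox n j := by
  have hb : hi i = lo j := by simp [Fin.ext_iff, hij]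
  have hab : lo i ≠ lo j := by simp [Fin.ext_iff]; omega
  have hbc : lo j ≠ hi j := lo_ne_hi j
  have hac : lo i ≠ hi j := by simp [Fin.ext_iff]; omega
  simp only [cox_eq]
  rw [hb]
  have h1 : Equiv.swap (lo i) (lo j) * Equiv.swap (lo j) (hi j) * Equiv.swap (lo i) (lo j)
      = Equiv.swap (lo i) (hi j) := by
    rw [Equiv.swap_comm (lo i) (lo j), Equiv.swap_comm (lo j) (hi j),
      Equiv.swap_mul_swap_mul_swap hbc.symm (fun h => hac h.symm)]
  have h2 : Equiv.swap (lo j) (hi j) * Equiv.swap (lo i) (lo j) * Equiv.swap (lo j) (hi j)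
      = Equiv.swap (hi j) (lo i) :=
    Equiv.swap_mul_swap_mul_swap hab hac
  rw [h1, h2, Equiv.swap_comm]

lemma wordProd_append (l m : List (Fin (n-1))) :
    wordProd n (l ++ m) = wordProd n l * wordProd n m := by
  simp [wordProd]

lemma commMove_symm {l l' : List (Fin (n-1))} (h : CommMove n l l') : CommMove n l' l := by
  obtain ⟨a, b, i, j, hij, h1, h2⟩ := h
  exact ⟨a, b, j, i, hij.symm, h2, h1⟩

lemma commMove_wordProd {l l' : List (Fin (n-1))} (h : CommMove n l l') :
    wordProd n l = wordProd n l' := by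
  obtain ⟨a, b, i, j, hij, rfl, rfl⟩ := h
  rw [wordProd_append, wordProd_append, wordProd_cons, wordProd_cons, wordProd_cons,
    wordProd_cons, ← mul_assoc (cox n i), ← mul_assoc (cox n j), cox_comm hij]

lemma commMove_perm {l l' : List (Fin (n-1))} (h : CommMove n l l') : l.Perm l' := by
  obtain ⟨a, b, i, j, hij, rfl, rfl⟩ := h
  exact List.Perm.append_left a (List.Perm.swap j i b)

lemma rtg_perm {l l' : List (Fin (n-1))}
    (h : Relation.ReflTransGen (CommMove n) l l') : l.Perm l' := by
  induction h with
  | refl => exact List.Perm.refl _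
  | tail _ hstep ih => exact ih.trans (commMove_perm hstep)

lemma rtg_cons {t t' : List (Fin (n-1))} (i : Fin (n-1))
    (h : Relation.ReflTransGen (CommMove n) t t') :
    Relation.ReflTransGen (CommMove n) (i :: t) (i :: t') := by
  induction h with
  | refl => exact Relation.ReflTransGen.refl
  | tail _ hstep ih =>
    refine ih.tail ?_
    obtain ⟨a, b, x, y, hxy, rfl, rfl⟩ := hstep
    exact ⟨i :: a, b, x, y, hxy, rfl, rfl⟩

lemma rtg_symm {l l' : List (Fin (n-1))}
    (h : Relation.ReflTransGen (CommMove n) l l') :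
    Relation.ReflTransGen (CommMove n) l' l :=
  by haveI : Std.Symm (CommMove n) := ⟨fun _ _ => commMove_symm⟩; exact Std.Symm.symm _ _ h

lemma des_of_reduced_cons {w : Equiv.Perm (Fin n)} {i : Fin (n-1)} {t : List (Fin (n-1))}
    (h : IsReducedWord n w (i :: t)) :
    Des i w ∧ IsReducedWord n (cox n i * w) t := by
  rw [reduced_iff] at h
  obtain ⟨h1, h2⟩ := h
  have hprod : wordProd n t = cox n i * w := by
    rw [← h1, wordProd_cons, ← mul_assoc, cox_mul_self, one_mul]
  have hlen : t.length + 1 = Inv w := by simpa using h2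
  have hdes : Des i w := by
    by_contra hnd
    have := inv_asc hnd
    have := inv_le_length t
    rw [hprod] at this
    omega
  have := inv_des hdes
  exact ⟨hdes, reduced_iff.mpr ⟨hprod, by omega⟩⟩

lemma reduced_cons_of {w : Equiv.Perm (Fin n)} {i : Fin (n-1)} {t : List (Fin (n-1))}
    (hdes : Des i w) (h : IsReducedWord n (cox n i * w) t) :
    IsReducedWord n w (i :: t) := by
  rw [reduced_iff] at h ⊢
  obtain ⟨h1, h2⟩ := h
  have := inv_des hdes
  refine ⟨?_, by simp [h2]; omega⟩
  rw [wordProd_cons, h1, ← mul_assoc, cox_mul_self, one_mul]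

end FCaux

namespace FCaux
variable {n : ℕ}

lemma cox_fix {i : Fin (n-1)} {x : Fin n} (h1 : (x : ℕ) ≠ (i : ℕ)) (h2 : (x : ℕ) ≠ (i : ℕ) + 1) :
    cox n i x = x := by
  rw [cox_eq]
  exact Equiv.swap_apply_of_ne_of_ne (by simp [Fin.ext_iff, h1]) (by simp [Fin.ext_iff, h2])

lemma inv_cox_mul (w : Equiv.Perm (Fin n)) (i : Fin (n-1)) (x : Fin n) :
    (cox n i * w)⁻¹ x = w⁻¹ (cox n i x) := by
  simp [mul_inv_rev, cox_eq]

lemma cox_apply_lo (i : Fin (n-1)) : cox n i (lo i) = hi i := by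
  rw [cox_eq]; exact Equiv.swap_apply_left _ _

lemma cox_apply_hi (i : Fin (n-1)) : cox n i (hi i) = lo i := by
  rw [cox_eq]; exact Equiv.swap_apply_right _ _

lemma pres {w : Equiv.Perm (Fin n)} {i : Fin (n-1)}
    (hA : Avoids321 n w) (hd : Des i w) : Avoids321 n (cox n i * w) := by
  rintro ⟨x, y, z, hxy, hyz, h1, h2⟩
  set σ := cox n i * w with hσ
  have hinv : ∀ t, σ⁻¹ t = w⁻¹ (cox n i t) := inv_cox_mul w i
  have hpos : σ⁻¹ (lo i) < σ⁻¹ (hi i) := by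
    rw [hinv, hinv, cox_apply_lo, cox_apply_hi]
    exact hd
  have happ : ∀ t, w t = Equiv.swap (lo i) (hi i) (σ t) := by
    intro t
    have : w = cox n i * σ := by
      rw [hσ, ← mul_assoc, cox_mul_self, one_mul]
    rw [this, cox_eq]
    rfl
  have hne1 : ¬ (σ x = hi i ∧ σ y = lo i) := by
    rintro ⟨e1, e2⟩
    have hx : x = σ⁻¹ (hi i) := by rw [← e1]; simp
    have hy : y = σ⁻¹ (lo i) := by rw [← e2]; simp
    rw [hx, hy] at hxy
    exact absurd hpos (asymm hxy)
  have hne2 : ¬ (σ y = hi i ∧ σ z = lo i) := by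
    rintro ⟨e1, e2⟩
    have hy : y = σ⁻¹ (hi i) := by rw [← e1]; simp
    have hz : z = σ⁻¹ (lo i) := by rw [← e2]; simp
    rw [hy, hz] at hyz
    exact absurd hpos (asymm hyz)
  exact hA ⟨x, y, z, hxy, hyz,
    by rw [happ y, happ z]; exact swap_lt_swap h1 hne2,
    by rw [happ x, happ y]; exact swap_lt_swap h2 hne1⟩

lemma no_double_descent {w : Equiv.Perm (Fin n)} {i j : Fin (n-1)}
    (hA : Avoids321 n w) (hdi : Des i w) (hdj : Des j w) (hij : (i : ℕ) + 1 = (j : ℕ)) :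
    False := by
  have hb : hi i = lo j := by simp [Fin.ext_iff, hij]
  refine hA ⟨w⁻¹ (hi j), w⁻¹ (lo j), w⁻¹ (lo i), hdj, ?_, ?_, ?_⟩
  · rw [← hb]; exact hdi
  · simp only [Equiv.Perm.coe_inv, Equiv.apply_symm_apply, Fin.lt_def, lo_val, hi_val]
    omega
  · simp only [Equiv.Perm.coe_inv, Equiv.apply_symm_apply, Fin.lt_def, lo_val, hi_val]
    omega

lemma des_cox_mul {w : Equiv.Perm (Fin n)} {i j : Fin (n-1)}
    (h : (i : ℕ) + 1 < (j : ℕ) ∨ (j : ℕ) + 1 < (i : ℕ)) (hdj : Des j w) :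
    Des j (cox n i * w) := by
  unfold Des
  rw [inv_cox_mul, inv_cox_mul, cox_fix (x := hi j) (by simp; omega) (by simp; omega),
    cox_fix (x := lo j) (by simp; omega) (by simp; omega)]
  exact hdj

lemma fc_aux : ∀ (N : ℕ) (w : Equiv.Perm (Fin n)), Inv w ≤ N → Avoids321 n w →
    ∀ l l', IsReducedWord n w l → IsReducedWord n w l' →
      Relation.ReflTransGen (CommMove n) l l' := by
  intro N
  induction N with
  | zero =>
    intro w hN hA l l' hl hl'
    have h1 := (reduced_iff.mp hl).2
    have h2 := (reduced_iff.mp hl').2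
    obtain rfl : l = [] := List.length_eq_zero_iff.mp (by omega)
    obtain rfl : l' = [] := List.length_eq_zero_iff.mp (by omega)
    exact Relation.ReflTransGen.refl
  | succ N ih =>
    intro w hN hA l l' hl hl'
    match l, l' with
    | [], [] => exact Relation.ReflTransGen.refl
    | [], j :: t' =>
      have h1 := (reduced_iff.mp hl).2
      have h2 := (reduced_iff.mp hl').2
      simp at h1 h2; omega
    | i :: t, [] =>
      have h1 := (reduced_iff.mp hl).2
      have h2 := (reduced_iff.mp hl').2
      simp at h1 h2; omega
    | i :: t, j :: t' =>
      obtain ⟨hdi, hti⟩ := des_of_reduced_cons hl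
      obtain ⟨hdj, htj⟩ := des_of_reduced_cons hl'
      have hinvi := inv_des hdi
      have hinvj := inv_des hdj
      have hAi : Avoids321 n (cox n i * w) := pres hA hdi
      have hAj : Avoids321 n (cox n j * w) := pres hA hdj
      rcases eq_or_ne i j with rfl | hij
      · exact rtg_cons i (ih (cox n i * w) (by omega) hAi t t' hti htj)
      · have hfar : (i : ℕ) + 1 < (j : ℕ) ∨ (j : ℕ) + 1 < (i : ℕ) := by
          have hne : (i : ℕ) ≠ (j : ℕ) := fun h => hij (Fin.ext h)
          rcases Nat.lt_or_ge ((i : ℕ) + 1) (j : ℕ) with h | h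
          · exact Or.inl h
          rcases Nat.lt_or_ge ((j : ℕ) + 1) (i : ℕ) with h' | h'
          · exact Or.inr h'
          -- adjacent cases give a 321 pattern
          exfalso
          rcases Nat.lt_or_ge (i : ℕ) (j : ℕ) with hc | hc
          · exact no_double_descent hA hdi hdj (by omega)
          · exact no_double_descent hA hdj hdi (by omega)
        have hdji : Des j (cox n i * w) := des_cox_mul hfar hdj
        have hdij : Des i (cox n j * w) := des_cox_mul hfar.symm hdi
        set τ := cox n j * (cox n i * w) with hτ
        obtain ⟨m, hm1, hm2⟩ := exists_reduced_len τ
        have hmred : IsReducedWord n τ m := reduced_iff.mpr ⟨hm1, hm2⟩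
        have hjm : IsReducedWord n (cox n i * w) (j :: m) := reduced_cons_of hdji hmred
        have him : IsReducedWord n (cox n j * w) (i :: m) := by
          refine reduced_cons_of hdij ?_
          have : cox n i * (cox n j * w) = τ := by
            rw [hτ, ← mul_assoc, ← mul_assoc, cox_comm hfar]
          rw [this]
          exact hmred
        have step1 : Relation.ReflTransGen (CommMove n) (i :: t) (i :: j :: m) :=
          rtg_cons i (ih (cox n i * w) (by omega) hAi t (j :: m) hti hjm)
        have step2 : Relation.ReflTransGen (CommMove n) (i :: j :: m) (j :: i :: m) :=
          Relation.ReflTransGen.single ⟨[], m, i, j, hfar, rfl, rfl⟩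
        have step3 : Relation.ReflTransGen (CommMove n) (j :: t') (j :: i :: m) :=
          rtg_cons j (ih (cox n j * w) (by omega) hAj t' (i :: m) htj him)
        exact (step1.trans step2).trans (rtg_symm step3)

lemma avoids_imp_fc {w : Equiv.Perm (Fin n)} (hA : Avoids321 n w) : FullyCommutative n w :=
  fun l l' hl hl' => fc_aux (Inv w) w le_rfl hA l l' hl hl'

end FCaux

namespace FCaux
variable {n : ℕ}

lemma cox_cancel (i : Fin (n-1)) (g : Equiv.Perm (Fin n)) : cox n i * (cox n i * g) = g := by
  rw [← mul_assoc, cox_mul_self, one_mul]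

lemma lo_succ {d d' : Fin (n-1)} (h : (d : ℕ) + 1 = (d' : ℕ)) : lo d' = hi d := by
  simp [Fin.ext_iff, h]

/-- If a 321 pattern whose outer pairs are not value-`(hi v, lo v)` exists,
`cox v * w` still has a 321 pattern. -/
lemma survive {w : Equiv.Perm (Fin n)} {v : Fin (n-1)} {x y z : Fin n}
    (hxy : x < y) (hyz : y < z) (h1 : w z < w y) (h2 : w y < w x)
    (hA : Avoids321 n (cox n v * w))
    (hc1 : ¬ (w x = hi v ∧ w y = lo v)) (hc2 : ¬ (w y = hi v ∧ w z = lo v)) : False := by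
  refine hA ⟨x, y, z, hxy, hyz, ?_, ?_⟩
  · simp only [Equiv.Perm.mul_apply, cox_eq]
    exact swap_lt_swap h1 hc2
  · simp only [Equiv.Perm.mul_apply, cox_eq]
    exact swap_lt_swap h2 hc1

lemma braid_words {w : Equiv.Perm (Fin n)} {d d' : Fin (n-1)}
    (h : (d : ℕ) + 1 = (d' : ℕ)) (h1 : Des d w) (h2 : Des d' w) :
    ∃ (l l' : List (Fin (n-1))) (e : Fin (n-1)),
      IsReducedWord n w l ∧ IsReducedWord n w l' ∧ l.count e ≠ l'.count e := by
  have hld : lo d' = hi d := lo_succ h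
  have hd2 : Des d' (cox n d * w) := by
    unfold Des
    rw [inv_cox_mul, inv_cox_mul, cox_fix (x := hi d') (by simp; omega) (by simp; omega),
      hld, cox_apply_hi]
    have h2' := h2
    unfold Des at h2'
    rw [hld] at h2'
    exact lt_trans h2' h1
  have hd3 : Des d (cox n d' * (cox n d * w)) := by
    unfold Des
    rw [inv_cox_mul, inv_cox_mul, inv_cox_mul, inv_cox_mul]
    rw [← hld, cox_apply_lo, cox_fix (x := hi d') (by simp; omega) (by simp; omega)]
    rw [cox_fix (x := lo d) (by simp; omega) (by simp; omega), cox_apply_lo, ← hld]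
    exact h2
  obtain ⟨m, hm1, hm2⟩ := exists_reduced_len (cox n d * (cox n d' * (cox n d * w)))
  have hmred : IsReducedWord n (cox n d * (cox n d' * (cox n d * w))) m :=
    reduced_iff.mpr ⟨hm1, hm2⟩
  have hA : IsReducedWord n w (d :: d' :: d :: m) :=
    reduced_cons_of h1 (reduced_cons_of hd2 (reduced_cons_of hd3 hmred))
  have e3 := inv_des hd3
  have e2 := inv_des hd2
  have e1 := inv_des h1
  have hBprod : wordProd n (d' :: d :: d' :: m) = w := by
    rw [wordProd_cons, wordProd_cons, wordProd_cons, hm1]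
    have hb : cox n d' * (cox n d * cox n d') = cox n d * (cox n d' * cox n d) := by
      have := cox_braid h
      rw [mul_assoc, mul_assoc] at this
      exact this.symm
    calc cox n d' * (cox n d * (cox n d' * (cox n d * (cox n d' * (cox n d * w)))))
        = (cox n d' * (cox n d * cox n d')) * (cox n d * (cox n d' * (cox n d * w))) := by
          simp [mul_assoc]
      _ = (cox n d * (cox n d' * cox n d)) * (cox n d * (cox n d' * (cox n d * w))) := by
          rw [hb]
      _ = w := by
          simp only [mul_assoc, cox_cancel]
  have hB : IsReducedWord n w (d' :: d :: d' :: m) := by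
    rw [reduced_iff]
    refine ⟨hBprod, ?_⟩
    simp only [List.length_cons, hm2]
    omega
  refine ⟨d :: d' :: d :: m, d' :: d :: d' :: m, d, hA, hB, ?_⟩
  have hdd : ¬ (d = d') := fun hc => by rw [hc] at h; omega
  simp only [List.count_cons]
  split_ifs <;> simp_all

lemma two_words : ∀ (N : ℕ) (w : Equiv.Perm (Fin n)), Inv w ≤ N → ¬ Avoids321 n w →
    ∃ (l l' : List (Fin (n-1))) (e : Fin (n-1)),
      IsReducedWord n w l ∧ IsReducedWord n w l' ∧ l.count e ≠ l'.count e := by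
  intro N
  induction N with
  | zero =>
    intro w hN hA
    exfalso
    have hw : w = 1 := eq_one_of_inv_eq_zero (by omega)
    refine hA ?_
    rintro ⟨x, y, z, hxy, hyz, hp1, hp2⟩
    rw [hw] at hp1
    simp only [Equiv.Perm.one_apply] at hp1
    exact absurd hyz (asymm hp1)
  | succ N ih =>
    intro w hN hA
    obtain ⟨x, y, z, hxy, hyz, hp1, hp2⟩ := not_not.mp hA
    -- helper for the inductive (prepend) case
    have prepend : ∀ v : Fin (n-1), Des v w → ¬ Avoids321 n (cox n v * w) →
        ∃ (l l' : List (Fin (n-1))) (e : Fin (n-1)),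
          IsReducedWord n w l ∧ IsReducedWord n w l' ∧ l.count e ≠ l'.count e := by
      intro v hdes hnA
      have hinv := inv_des hdes
      obtain ⟨l, l', e, hl, hl', he⟩ := ih (cox n v * w) (by omega) hnA
      refine ⟨v :: l, v :: l', e, reduced_cons_of hdes hl, reduced_cons_of hdes hl', ?_⟩
      simp only [List.count_cons]
      split_ifs <;> omega
    -- first chain: between values w y and w x
    have hxval : ((w x : Fin n) : ℕ) < n := (w x).isLt
    have key1 := chain w ((w x : ℕ) - (w y : ℕ)) (w y : ℕ) (w x : ℕ)
      (by have := Fin.lt_def.mp hp2; omega) (by have := Fin.lt_def.mp hp2; omega) hxval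
    rw [Fin.eta, Fin.eta] at key1
    simp only [Equiv.Perm.coe_inv, Equiv.symm_apply_apply] at key1
    obtain ⟨v, hv1, hv2, hvdes⟩ := key1 hxy
    by_cases hAv : Avoids321 n (cox n v * w)
    · -- forced : w x = hi v ∧ w y = lo v
      have hforce1 : w x = hi v ∧ w y = lo v := by
        by_contra hc
        refine survive hxy hyz hp1 hp2 hAv hc ?_
        rintro ⟨e1, e2⟩
        have : ((w z : Fin n) : ℕ) = (v : ℕ) := by rw [e2]; rfl
        have hzy := Fin.lt_def.mp hp1
        omega
      -- second chain : between values w z and w y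
      have hyval : ((w y : Fin n) : ℕ) < n := (w y).isLt
      have key2 := chain w ((w y : ℕ) - (w z : ℕ)) (w z : ℕ) (w y : ℕ)
        (by have := Fin.lt_def.mp hp1; omega) (by have := Fin.lt_def.mp hp1; omega) hyval
      rw [Fin.eta, Fin.eta] at key2
      simp only [Equiv.Perm.coe_inv, Equiv.symm_apply_apply] at key2
      obtain ⟨v', hv'1, hv'2, hv'des⟩ := key2 hyz
      by_cases hAv' : Avoids321 n (cox n v' * w)
      · have hforce2 : w y = hi v' ∧ w z = lo v' := by
          by_contra hc
          refine survive hxy hyz hp1 hp2 hAv' ?_ hc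
          rintro ⟨e1, e2⟩
          have : ((w y : Fin n) : ℕ) = (v' : ℕ) := by rw [e2]; rfl
          omega
        -- now (v' : ℕ) + 1 = (v : ℕ), both descents: braid
        have hvv : (v' : ℕ) + 1 = (v : ℕ) := by
          have e1 : ((w y : Fin n) : ℕ) = (v : ℕ) := by rw [hforce1.2]; rfl
          have e2 : ((w y : Fin n) : ℕ) = (v' : ℕ) + 1 := by rw [hforce2.1]; rfl
          omega
        exact braid_words hvv hv'des hvdes
      · exact prepend v' hv'des hAv'
    · exact prepend v hvdes hAv

lemma fc_imp_avoids {w : Equiv.Perm (Fin n)} (hFC : FullyCommutative n w) : Avoids321 n w := by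
  by_contra hA
  obtain ⟨l, l', e, hl, hl', he⟩ := two_words (Inv w) w le_rfl hA
  exact he ((rtg_perm (hFC l l' hl hl')).count_eq e)

end FCaux


/-- A permutation is 321-avoiding iff it is fully commutative. -/
theorem stmt15 (n : ℕ) (w : Equiv.Perm (Fin n)) :
    Avoids321 n w ↔ FullyCommutative n w := by
  exact ⟨FCaux.avoids_imp_fc, FCaux.fc_imp_avoids⟩
end

section
/- With u the endomorphism of V ⊗ V as above, u is idempotent (u² = u), and the operators u_i = 1^{⊗(i-1)} ⊗ u ⊗ 1^{⊗(n-i-1)} on V^{⊗n} satisfy (v+v⁻¹)² u_i u_j u_i = u_i for |i-j| = 1 and u_i u_j = u_j u_i for |i-j| > 1, i.e. they define a representation of the Jones algebra A_n((v+v⁻¹)²). -/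
set_option maxHeartbeats 1000000

open Kronecker


/-- The matrix of the projection `u` of `V ⊗ V` onto the one-dimensional summand,
in the basis `x₀⊗x₀, x₀⊗x₁, x₁⊗x₀, x₁⊗x₁` (indexed by `Fin 2 × Fin 2`). -/
def Umat (k : Type*) [Field k] (v : k) : Matrix (Fin 2 × Fin 2) (Fin 2 × Fin 2) k :=
  (v + v⁻¹)⁻¹ • Matrix.of fun p q =>
    if p = ((0 : Fin 2), (1 : Fin 2)) then
      (if q = ((0 : Fin 2), (1 : Fin 2)) then v⁻¹
       else if q = ((1 : Fin 2), (0 : Fin 2)) then -1 else 0)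
    else if p = ((1 : Fin 2), (0 : Fin 2)) then
      (if q = ((0 : Fin 2), (1 : Fin 2)) then -1
       else if q = ((1 : Fin 2), (0 : Fin 2)) then v else 0)
    else 0

/-- The matrix of `u_i = 1^{⊗(i-1)} ⊗ u ⊗ 1^{⊗(n-i-1)})` on `V^{⊗n}`,
where `V^{⊗n}` has basis indexed by `Fin n → Fin 2` and `u` acts in tensor
positions `i, i+1`. -/
def Upos (k : Type*) [Field k] (v : k) (n : ℕ) (i : ℕ) (h : i + 1 < n) :
    Matrix (Fin n → Fin 2) (Fin n → Fin 2) k :=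
  Matrix.of fun x y =>
    if ∀ j : Fin n, (j : ℕ) ≠ i → (j : ℕ) ≠ i + 1 → x j = y j then
      Umat k v (x ⟨i, by omega⟩, x ⟨i + 1, h⟩) (y ⟨i, by omega⟩, y ⟨i + 1, h⟩)
    else 0

def av (k : Type*) [Field k] (v : k) : Fin 2 × Fin 2 → k := fun p =>
  if p = ((0 : Fin 2), (1 : Fin 2)) then 1 else if p = ((1 : Fin 2), (0 : Fin 2)) then -v else 0

def bv (k : Type*) [Field k] (v : k) : Fin 2 × Fin 2 → k := fun p =>
  if p = ((0 : Fin 2), (1 : Fin 2)) then v⁻¹ else if p = ((1 : Fin 2), (0 : Fin 2)) then -1 else 0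

def Q4 (k : Type*) [Field k] (v : k) : Matrix (Fin 2 × Fin 2) (Fin 2 × Fin 2) k :=
  Matrix.of fun p q => av k v p * bv k v q

lemma Umat_eq (k : Type*) [Field k] (v : k) (hv : v ≠ 0) :
    Umat k v = (v + v⁻¹)⁻¹ • Q4 k v := by
  ext ⟨a, b⟩ ⟨c, d⟩
  fin_cases a <;> fin_cases b <;> fin_cases c <;> fin_cases d <;>
    simp [Umat, Q4, av, bv, Prod.ext_iff] <;> field_simp

lemma Q4_mul (k : Type*) [Field k] (v : k) :
    Q4 k v * Q4 k v = (v + v⁻¹) • Q4 k v := by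
  ext p q
  rw [Matrix.mul_apply]
  have : ∀ z : Fin 2 × Fin 2, Q4 k v p z * Q4 k v z q
      = (av k v p * bv k v q) * (bv k v z * av k v z) := by
    intro z; simp only [Q4, Matrix.of_apply]; ring
  rw [Finset.sum_congr rfl fun z _ => this z, ← Finset.mul_sum]
  have hs : ∑ z : Fin 2 × Fin 2, bv k v z * av k v z = v + v⁻¹ := by
    simp [Fintype.sum_prod_type, Fin.sum_univ_two, av, bv, Prod.ext_iff]
    ring
  rw [hs]
  simp only [Q4, Matrix.smul_apply, Matrix.of_apply, smul_eq_mul]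
  ring

lemma Umat_idem (k : Type*) [Field k] (v : k) (hv : v ≠ 0) (hδ : v + v⁻¹ ≠ 0) :
    Umat k v * Umat k v = Umat k v := by
  have h1 : v * v + 1 ≠ 0 := by
    have : v * v + 1 = v * (v + v⁻¹) := by field_simp
    rw [this]; exact mul_ne_zero hv hδ
  rw [Umat_eq k v hv, smul_mul_smul_comm, Q4_mul, smul_smul]
  congr 1
  field_simp [h1]

/-- the rest of the sites, for a pair of adjacent sites. -/
def R2 (n i : ℕ) := {j : Fin n // (j : ℕ) ≠ i ∧ (j : ℕ) ≠ i + 1}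

instance (n i : ℕ) : Fintype (R2 n i) := by unfold R2; infer_instance
instance (n i : ℕ) : DecidableEq (R2 n i) := by unfold R2; infer_instance

def E2 (n i : ℕ) (h : i + 1 < n) :
    (Fin n → Fin 2) ≃ (Fin 2 × Fin 2) × (R2 n i → Fin 2) where
  toFun x := ((x ⟨i, by omega⟩, x ⟨i + 1, h⟩), fun j => x j.1)
  invFun p j :=
    if h1 : (j : ℕ) = i then p.1.1
    else if h2 : (j : ℕ) = i + 1 then p.1.2
    else p.2 ⟨j, h1, h2⟩
  left_inv x := by
    funext j
    dsimp only
    split_ifs with h1 h2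
    · exact congrArg x (Fin.ext h1.symm)
    · exact congrArg x (Fin.ext h2.symm)
    · rfl
  right_inv p := by
    obtain ⟨⟨a, b⟩, g⟩ := p
    refine Prod.ext (Prod.ext ?_ ?_) (funext fun j => ?_)
    · simp
    · have : (i : ℕ) + 1 ≠ i := by omega
      simp [this]
    · obtain ⟨j, h1, h2⟩ := j
      simp [h1, h2]

lemma upos_eq_E2 (k : Type*) [Field k] (v : k) (n i : ℕ) (h : i + 1 < n) :
    Upos k v n i h
      = ((Umat k v ⊗ₖ (1 : Matrix (R2 n i → Fin 2) (R2 n i → Fin 2) k)).submatrix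
          (E2 n i h) (E2 n i h)) := by
  ext x y
  simp only [Upos, Matrix.of_apply, Matrix.submatrix_apply, E2, Equiv.coe_fn_mk,
    Matrix.kroneckerMap_apply, Matrix.one_apply]
  by_cases hc : ∀ j : Fin n, (j : ℕ) ≠ i → (j : ℕ) ≠ i + 1 → x j = y j
  · rw [if_pos hc, if_pos, mul_one]
    funext j
    exact hc j.1 j.2.1 j.2.2
  · rw [if_neg hc, if_neg, mul_zero]
    intro hf
    exact hc fun j h1 h2 => congrFun hf ⟨j, h1, h2⟩

lemma upos_idem (k : Type*) [Field k] (v : k) (hv : v ≠ 0) (hδ : v + v⁻¹ ≠ 0)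
    (n i : ℕ) (h : i + 1 < n) :
    Upos k v n i h * Upos k v n i h = Upos k v n i h := by
  rw [upos_eq_E2, Matrix.submatrix_mul_equiv, ← Matrix.mul_kronecker_mul, Matrix.one_mul,
    Umat_idem k v hv hδ]

/-- the rest of the sites, for a triple of adjacent sites. -/
def R3 (n i : ℕ) := {j : Fin n // (j : ℕ) ≠ i ∧ (j : ℕ) ≠ i + 1 ∧ (j : ℕ) ≠ i + 2}

instance (n i : ℕ) : Fintype (R3 n i) := by unfold R3; infer_instance
instance (n i : ℕ) : DecidableEq (R3 n i) := by unfold R3; infer_instance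

def E3 (n i : ℕ) (h : i + 2 < n) :
    (Fin n → Fin 2) ≃ ((Fin 2 × Fin 2) × Fin 2) × (R3 n i → Fin 2) where
  toFun x := (((x ⟨i, by omega⟩, x ⟨i + 1, by omega⟩), x ⟨i + 2, h⟩), fun j => x j.1)
  invFun p j :=
    if h1 : (j : ℕ) = i then p.1.1.1
    else if h2 : (j : ℕ) = i + 1 then p.1.1.2
    else if h3 : (j : ℕ) = i + 2 then p.1.2
    else p.2 ⟨j, h1, h2, h3⟩
  left_inv x := by
    funext j
    dsimp only
    split_ifs with h1 h2 h3
    · exact congrArg x (Fin.ext h1.symm)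
    · exact congrArg x (Fin.ext h2.symm)
    · exact congrArg x (Fin.ext h3.symm)
    · rfl
  right_inv p := by
    obtain ⟨⟨⟨a, b⟩, c⟩, g⟩ := p
    have e1 : (i : ℕ) + 1 ≠ i := by omega
    have e2 : (i : ℕ) + 2 ≠ i := by omega
    have e3 : (i : ℕ) + 2 ≠ i + 1 := by omega
    refine Prod.ext (Prod.ext (Prod.ext ?_ ?_) ?_) (funext fun j => ?_)
    · simp
    · simp [e1]
    · simp [e2, e3]
    · obtain ⟨j, h1, h2, h3⟩ := j
      simp [h1, h2, h3]

def Pm1 (k : Type*) [Field k] (v : k) :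
    Matrix ((Fin 2 × Fin 2) × Fin 2) ((Fin 2 × Fin 2) × Fin 2) k :=
  Matrix.of fun p q => av k v p.1 * bv k v q.1 * (if p.2 = q.2 then 1 else 0)

def Pm2 (k : Type*) [Field k] (v : k) :
    Matrix ((Fin 2 × Fin 2) × Fin 2) ((Fin 2 × Fin 2) × Fin 2) k :=
  Matrix.of fun p q =>
    (if p.1.1 = q.1.1 then 1 else 0) * (av k v (p.1.2, p.2) * bv k v (q.1.2, q.2))

lemma upos_eq_E3_left (k : Type*) [Field k] (v : k) (hv : v ≠ 0) (n i : ℕ)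
    (h1 : i + 1 < n) (h : i + 2 < n) :
    Upos k v n i h1
      = ((((v + v⁻¹)⁻¹ • Pm1 k v) ⊗ₖ (1 : Matrix (R3 n i → Fin 2) (R3 n i → Fin 2) k)).submatrix
          (E3 n i h) (E3 n i h)) := by
  ext x y
  simp only [Upos, Matrix.of_apply, Matrix.submatrix_apply, E3, Equiv.coe_fn_mk,
    Matrix.kroneckerMap_apply, Matrix.one_apply, Matrix.smul_apply, Pm1, smul_eq_mul,
    Umat_eq k v hv, Q4]
  by_cases hc : ∀ j : Fin n, (j : ℕ) ≠ i → (j : ℕ) ≠ i + 1 → x j = y j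
  · rw [if_pos hc]
    have h2 : x ⟨i + 2, h⟩ = y ⟨i + 2, h⟩ := hc ⟨i + 2, h⟩ (by simp only [Fin.val_mk]; omega) (by simp only [Fin.val_mk]; omega)
    have h3 : (fun j : R3 n i => x j.1) = fun j => y j.1 :=
      funext fun j => hc j.1 j.2.1 j.2.2.1
    rw [if_pos h2, if_pos h3]
    ring
  · rw [if_neg hc]
    push_neg at hc
    obtain ⟨j, hj1, hj2, hj3⟩ := hc
    by_cases hj4 : (j : ℕ) = i + 2
    · have hji : (⟨i + 2, h⟩ : Fin n) = j := Fin.ext hj4.symm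
      rw [hji, if_neg hj3]
      ring
    · have hne : (fun l : R3 n i => x l.1) ≠ fun l => y l.1 := fun hf =>
        hj3 (congrFun hf ⟨j, hj1, hj2, hj4⟩)
      rw [if_neg hne, mul_zero]

lemma upos_eq_E3_right (k : Type*) [Field k] (v : k) (hv : v ≠ 0) (n i : ℕ)
    (h1 : i + 1 + 1 < n) (h : i + 2 < n) :
    Upos k v n (i + 1) h1
      = ((((v + v⁻¹)⁻¹ • Pm2 k v) ⊗ₖ (1 : Matrix (R3 n i → Fin 2) (R3 n i → Fin 2) k)).submatrix
          (E3 n i h) (E3 n i h)) := by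
  ext x y
  simp only [Upos, Matrix.of_apply, Matrix.submatrix_apply, E3, Equiv.coe_fn_mk,
    Matrix.kroneckerMap_apply, Matrix.one_apply, Matrix.smul_apply, Pm2, smul_eq_mul,
    Umat_eq k v hv, Q4]
  by_cases hc : ∀ j : Fin n, (j : ℕ) ≠ i + 1 → (j : ℕ) ≠ i + 1 + 1 → x j = y j
  · rw [if_pos hc]
    have h2 : x ⟨i, by omega⟩ = y ⟨i, by omega⟩ := hc ⟨i, by omega⟩ (by simp only [Fin.val_mk]; omega) (by simp only [Fin.val_mk]; omega)
    have h3 : (fun j : R3 n i => x j.1) = fun j => y j.1 :=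
      funext fun j => hc j.1 j.2.2.1 (by have := j.2.2.2; omega)
    rw [if_pos h2, if_pos h3]
    ring
  · rw [if_neg hc]
    push_neg at hc
    obtain ⟨j, hj1, hj2, hj3⟩ := hc
    by_cases hj4 : (j : ℕ) = i
    · have hji : (⟨i, by omega⟩ : Fin n) = j := Fin.ext hj4.symm
      rw [hji, if_neg hj3]
      ring
    · have hne : (fun l : R3 n i => x l.1) ≠ fun l => y l.1 := fun hf =>
        hj3 (congrFun hf ⟨j, hj4, hj1, by omega⟩)
      rw [if_neg hne, mul_zero]

set_option maxHeartbeats 4000000 in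
lemma PmK1 (k : Type*) [Field k] (v : k) (hv : v ≠ 0) :
    Pm1 k v * Pm2 k v * Pm1 k v = Pm1 k v := by
  ext ⟨⟨x1, x2⟩, x3⟩ ⟨⟨y1, y2⟩, y3⟩
  simp only [Matrix.mul_apply, Fintype.sum_prod_type, Fin.sum_univ_two, Pm1, Pm2, av, bv,
    Matrix.of_apply]
  fin_cases x1 <;> fin_cases x2 <;> fin_cases x3 <;> fin_cases y1 <;> fin_cases y2 <;>
    fin_cases y3 <;> simp [Prod.ext_iff] <;> field_simp

set_option maxHeartbeats 4000000 in
lemma PmK2 (k : Type*) [Field k] (v : k) (hv : v ≠ 0) :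
    Pm2 k v * Pm1 k v * Pm2 k v = Pm2 k v := by
  ext ⟨⟨x1, x2⟩, x3⟩ ⟨⟨y1, y2⟩, y3⟩
  simp only [Matrix.mul_apply, Fintype.sum_prod_type, Fin.sum_univ_two, Pm1, Pm2, av, bv,
    Matrix.of_apply]
  fin_cases x1 <;> fin_cases x2 <;> fin_cases x3 <;> fin_cases y1 <;> fin_cases y2 <;>
    fin_cases y3 <;> simp [Prod.ext_iff] <;> field_simp

lemma NK1 (k : Type*) [Field k] (v : k) (hv : v ≠ 0) (hδ : v + v⁻¹ ≠ 0) :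
    ((v + v⁻¹) ^ 2) • (((v + v⁻¹)⁻¹ • Pm1 k v) * (((v + v⁻¹)⁻¹ • Pm2 k v) : Matrix _ _ k) *
      ((v + v⁻¹)⁻¹ • Pm1 k v)) = (v + v⁻¹)⁻¹ • Pm1 k v := by
  simp only [Matrix.smul_mul, Matrix.mul_smul, smul_smul]
  rw [PmK1 k v hv]
  congr 1
  have h0 := hδ
  generalize v + v⁻¹ = d at h0 ⊢
  field_simp

lemma NK2 (k : Type*) [Field k] (v : k) (hv : v ≠ 0) (hδ : v + v⁻¹ ≠ 0) :
    ((v + v⁻¹) ^ 2) • (((v + v⁻¹)⁻¹ • Pm2 k v) * (((v + v⁻¹)⁻¹ • Pm1 k v) : Matrix _ _ k) *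
      ((v + v⁻¹)⁻¹ • Pm2 k v)) = (v + v⁻¹)⁻¹ • Pm2 k v := by
  simp only [Matrix.smul_mul, Matrix.mul_smul, smul_smul]
  rw [PmK2 k v hv]
  congr 1
  have h0 := hδ
  generalize v + v⁻¹ = d at h0 ⊢
  field_simp

lemma submatrix_smul' {k : Type*} [Field k] {m n l o : Type*} (r : k) (A : Matrix m n k)
    (e : l → m) (f : o → n) : r • A.submatrix e f = (r • A).submatrix e f := rfl

lemma jones_rel (k : Type*) [Field k] (v : k) (hv : v ≠ 0) (hδ : v + v⁻¹ ≠ 0) (n i : ℕ)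
    (h1 : i + 1 < n) (h2 : i + 1 + 1 < n) :
    ((v + v⁻¹) ^ 2) • (Upos k v n i h1 * Upos k v n (i + 1) h2 * Upos k v n i h1) =
      Upos k v n i h1 := by
  have h : i + 2 < n := by omega
  rw [upos_eq_E3_left k v hv n i h1 h, upos_eq_E3_right k v hv n i h2 h,
    Matrix.submatrix_mul_equiv, Matrix.submatrix_mul_equiv, submatrix_smul',
    ← Matrix.mul_kronecker_mul, ← Matrix.mul_kronecker_mul, Matrix.one_mul, Matrix.one_mul,
    ← Matrix.smul_kronecker, NK1 k v hv hδ]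

lemma jones_rel' (k : Type*) [Field k] (v : k) (hv : v ≠ 0) (hδ : v + v⁻¹ ≠ 0) (n i : ℕ)
    (h1 : i + 1 < n) (h2 : i + 1 + 1 < n) :
    ((v + v⁻¹) ^ 2) • (Upos k v n (i + 1) h2 * Upos k v n i h1 * Upos k v n (i + 1) h2) =
      Upos k v n (i + 1) h2 := by
  have h : i + 2 < n := by omega
  rw [upos_eq_E3_left k v hv n i h1 h, upos_eq_E3_right k v hv n i h2 h,
    Matrix.submatrix_mul_equiv, Matrix.submatrix_mul_equiv, submatrix_smul',
    ← Matrix.mul_kronecker_mul, ← Matrix.mul_kronecker_mul, Matrix.one_mul, Matrix.one_mul,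
    ← Matrix.smul_kronecker, NK2 k v hv hδ]

lemma mul_disjoint (k : Type*) [Field k] (v : k) (n i j : ℕ) (hi : i + 1 < n) (hj : j + 1 < n)
    (hd : i + 1 < j ∨ j + 1 < i) :
    Upos k v n i hi * Upos k v n j hj =
      Matrix.of fun x y =>
        if ∀ l : Fin n, (l : ℕ) ≠ i → (l : ℕ) ≠ i + 1 → (l : ℕ) ≠ j → (l : ℕ) ≠ j + 1 →
            x l = y l then
          Umat k v (x ⟨i, by omega⟩, x ⟨i + 1, hi⟩) (y ⟨i, by omega⟩, y ⟨i + 1, hi⟩) *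
          Umat k v (x ⟨j, by omega⟩, x ⟨j + 1, hj⟩) (y ⟨j, by omega⟩, y ⟨j + 1, hj⟩)
        else 0 := by
  ext x y
  rw [Matrix.mul_apply]
  classical
  set z₀ : Fin n → Fin 2 := fun l => if (l : ℕ) = i ∨ (l : ℕ) = i + 1 then y l else x l with hz₀
  have hzero : ∀ z : Fin n → Fin 2, z ≠ z₀ →
      Upos k v n i hi x z * Upos k v n j hj z y = 0 := by
    intro z hz
    simp only [Upos, Matrix.of_apply]
    rw [mul_eq_zero]
    by_cases hA : ∀ l : Fin n, (l : ℕ) ≠ i → (l : ℕ) ≠ i + 1 → x l = z l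
    · by_cases hB : ∀ l : Fin n, (l : ℕ) ≠ j → (l : ℕ) ≠ j + 1 → z l = y l
      · exfalso
        apply hz
        funext l
        by_cases hl : (l : ℕ) = i ∨ (l : ℕ) = i + 1
        · have hzy : z l = y l := hB l (by omega) (by omega)
          simp [z₀, hl, hzy]
        · push_neg at hl
          have hxz : x l = z l := hA l hl.1 hl.2
          simp [z₀, hl.1, hl.2, ← hxz]
      · right; rw [if_neg hB]
    · left; rw [if_neg hA]
  rw [Finset.sum_eq_single_of_mem z₀ (Finset.mem_univ z₀) fun b _ hb => hzero b hb]
  simp only [Upos, Matrix.of_apply]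
  by_cases hc : ∀ l : Fin n, (l : ℕ) ≠ i → (l : ℕ) ≠ i + 1 → (l : ℕ) ≠ j → (l : ℕ) ≠ j + 1 →
      x l = y l
  · rw [if_pos hc]
    have c1 : ∀ l : Fin n, (l : ℕ) ≠ i → (l : ℕ) ≠ i + 1 → x l = z₀ l := by
      intro l h1 h2; simp [z₀, h1, h2]
    have c2 : ∀ l : Fin n, (l : ℕ) ≠ j → (l : ℕ) ≠ j + 1 → z₀ l = y l := by
      intro l h1 h2
      by_cases hl : (l : ℕ) = i ∨ (l : ℕ) = i + 1
      · simp [z₀, hl]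
      · push_neg at hl
        simp only [z₀]
        rw [if_neg (by omega)]
        exact hc l hl.1 hl.2 h1 h2
    rw [if_pos c1, if_pos c2]
    have e1 : ¬(j = i ∨ j = i + 1) := by omega
    have e2 : ¬(j + 1 = i ∨ j + 1 = i + 1) := by omega
    have e3 : ¬(j + 1 = i ∨ j = i) := by omega
    simp only [z₀]
    simp [e1, e2, e3]
  · rw [if_neg hc]
    push_neg at hc
    obtain ⟨l, h1, h2, h3, h4, hxy⟩ := hc
    have hne : ¬ ∀ m : Fin n, (m : ℕ) ≠ j → (m : ℕ) ≠ j + 1 → z₀ m = y m := by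
      intro H
      apply hxy
      have := H l h3 h4
      simpa [z₀, h1, h2] using this
    rw [if_neg hne, mul_zero]

lemma upos_comm (k : Type*) [Field k] (v : k) (n i j : ℕ) (hi : i + 1 < n) (hj : j + 1 < n)
    (hd : i + 1 < j ∨ j + 1 < i) :
    Upos k v n i hi * Upos k v n j hj = Upos k v n j hj * Upos k v n i hi := by
  rw [mul_disjoint k v n i j hi hj hd, mul_disjoint k v n j i hj hi (by omega)]
  ext x y
  simp only [Matrix.of_apply]
  exact if_congr ⟨fun H l a b c d => H l c d a b, fun H l a b c d => H l c d a b⟩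
    (mul_comm _ _) rfl

/-- `u` is idempotent, and the operators `u_i = 1^{⊗(i-1)} ⊗ u ⊗ 1^{⊗(n-i-1)}`
satisfy the Jones algebra relations for `β = (v+v⁻¹)²`. -/
theorem stmt19 (k : Type*) [Field k] (v : k) (hv : v ≠ 0) (hδ : v + v⁻¹ ≠ 0) (n : ℕ) :
    (Umat k v * Umat k v = Umat k v) ∧
    (∀ (i : ℕ) (h : i + 1 < n), Upos k v n i h * Upos k v n i h = Upos k v n i h) ∧
    (∀ (i j : ℕ) (hi : i + 1 < n) (hj : j + 1 < n), (i + 1 = j ∨ j + 1 = i) →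
      ((v + v⁻¹) ^ 2) • (Upos k v n i hi * Upos k v n j hj * Upos k v n i hi) =
        Upos k v n i hi) ∧
    (∀ (i j : ℕ) (hi : i + 1 < n) (hj : j + 1 < n), (i + 1 < j ∨ j + 1 < i) →
      Upos k v n i hi * Upos k v n j hj = Upos k v n j hj * Upos k v n i hi) := by
  refine ⟨Umat_idem k v hv hδ, fun i h => upos_idem k v hv hδ n i h, ?_, ?_⟩
  · intro i j hi hj hcase
    rcases hcase with h | h
    · subst h
      exact jones_rel k v hv hδ n i hi hj
    · subst h
      exact jones_rel' k v hv hδ n j hj hi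
  · intro i j hi hj hd
    exact upos_comm k v n i j hi hj hd
end
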